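/- arXiv:1907.03725 — 5 statements merged into one kernel-verified Lean document; each statement's English description precedes it below -/
import Mathlib

section
/- For all real numbers a and b with a ≤ b and any real p ≥ 1, one has |a - b|^p ≤ 2^(p-1) * (|b|^p * sign(b) - |a|^p * sign(a)), where sign(x) = 1 if x > 0, -1 if x < 0, and 0 if x = 0. -/
lemma aux_superadd (x y p : ℝ) (hx : 0 ≤ x) (hy : 0 ≤ y) (hp : 1 ≤ p) :
    x ^ p + y ^ p ≤ (x + y) ^ p := by
  lift x to NNReal using hx
  lift y to NNReal using hy
  have h := NNReal.rpow_add_rpow_le_add x y hp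
  have hp0 : (0:ℝ) < p := lt_of_lt_of_le zero_lt_one hp
  exact_mod_cast (NNReal.rpow_inv_le_iff hp0).mp (by rwa [one_div] at h)

lemma aux_pow2 (x y p : ℝ) (hx : 0 ≤ x) (hy : 0 ≤ y) (hp : 1 ≤ p) :
    (x + y) ^ p ≤ 2 ^ (p - 1) * (x ^ p + y ^ p) := by
  lift x to NNReal using hx
  lift y to NNReal using hy
  exact_mod_cast NNReal.rpow_add_le_mul_rpow_add_rpow x y hp

theorem stmt_0 (a b p : ℝ) (hab : a ≤ b) (hp : 1 ≤ p) :
    |a - b| ^ p ≤ 2 ^ (p - 1) * (|b| ^ p * Real.sign b - |a| ^ p * Real.sign a) := by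
  have h2 : (1:ℝ) ≤ 2 ^ (p - 1) :=
    Real.one_le_rpow (by norm_num) (by linarith)
  have habs : |a - b| = b - a := by rw [abs_sub_comm]; exact abs_of_nonneg (by linarith)
  rcases le_or_gt 0 a with ha | ha
  · -- 0 ≤ a ≤ b
    have hb : 0 ≤ b := le_trans ha hab
    rw [habs, abs_of_nonneg ha, abs_of_nonneg hb]
    have key : (b - a) ^ p + a ^ p ≤ b ^ p := by
      have := aux_superadd (b - a) a p (by linarith) ha hp
      rwa [sub_add_cancel] at this
    have hnn : (0:ℝ) ≤ (b - a) ^ p := Real.rpow_nonneg (by linarith) p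
    rcases eq_or_lt_of_le ha with rfl | ha'
    · simp only [Real.sign_zero, mul_zero, Real.rpow_nonneg, sub_zero]
      rcases eq_or_lt_of_le hb with rfl | hb'
      · simp [Real.sign_zero, Real.zero_rpow (show p ≠ 0 by positivity)]
      · rw [Real.sign_of_pos hb', mul_one]
        exact le_mul_of_one_le_left (Real.rpow_nonneg hb p) h2
    · have hb' : 0 < b := lt_of_lt_of_le ha' hab
      rw [Real.sign_of_pos ha', Real.sign_of_pos hb', mul_one, mul_one]
      calc (b - a) ^ p ≤ b ^ p - a ^ p := by linarith
        _ ≤ 2 ^ (p - 1) * (b ^ p - a ^ p) := le_mul_of_one_le_left (by linarith) h2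
  · rcases le_or_gt b 0 with hb | hb
    · -- a < 0, b ≤ 0
      rw [habs, abs_of_neg ha, abs_of_nonpos hb, Real.sign_of_neg ha]
      have key : (b - a) ^ p + (-b) ^ p ≤ (-a) ^ p := by
        have := aux_superadd (b - a) (-b) p (by linarith) (by linarith) hp
        rwa [show b - a + -b = -a by ring] at this
      have hnn : (0:ℝ) ≤ (b - a) ^ p := Real.rpow_nonneg (by linarith) p
      rcases eq_or_lt_of_le hb with rfl | hb'
      · simp only [Real.sign_zero, mul_zero, zero_sub, neg_zero, mul_neg_one, sub_neg_eq_add,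
          zero_add]
        exact le_mul_of_one_le_left (Real.rpow_nonneg (by linarith) p) h2
      · rw [Real.sign_of_neg hb', mul_neg_one, mul_neg_one, sub_neg_eq_add, neg_add_eq_sub]
        calc (b - a) ^ p ≤ (-a) ^ p - (-b) ^ p := by linarith
          _ ≤ 2 ^ (p - 1) * ((-a) ^ p - (-b) ^ p) := le_mul_of_one_le_left (by linarith) h2
    · -- a < 0 < b
      rw [habs, abs_of_neg ha, abs_of_pos hb, Real.sign_of_neg ha, Real.sign_of_pos hb,
        mul_one, mul_neg_one, sub_neg_eq_add]
      have := aux_pow2 b (-a) p (le_of_lt hb) (by linarith) hp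
      rwa [show b + -a = b - a by ring] at this
end

section
/- Let D ⊆ ℝⁿ be a measurable set and p ≥ 1. Define on L^p(D, ℝ) the partial order x ⪯ y iff x(ξ) ≤ y(ξ) for almost every ξ ∈ D, and set φ(x) := 2^(p−1) ∫_D |x(z)|^p sign(x(z)) dz and d(x,y) := ‖x − y‖_{L^p}^p. Then for any x, y ∈ L^p(D) with x ⪯ y, one has 0 ≤ d(x,y) ≤ φ(y) − φ(x). -/
open MeasureTheory ENNReal

private lemma abs_sign_le_one (t : ℝ) : |Real.sign t| ≤ 1 := by
  rcases Real.sign_apply_eq t with h | h | h <;> rw [h] <;> norm_num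

private lemma measurable_realSign : Measurable Real.sign := by
  have : Real.sign = fun r : ℝ => if r < 0 then (-1 : ℝ) else if 0 < r then 1 else 0 :=
    funext fun r => rfl
  rw [this]
  exact Measurable.ite (measurableSet_lt measurable_id measurable_const) measurable_const
    (Measurable.ite (measurableSet_lt measurable_const measurable_id) measurable_const
      measurable_const)

private lemma f_of_nonneg {q t : ℝ} (hq : 0 < q) (ht : 0 ≤ t) :
    |t| ^ q * Real.sign t = t ^ q := by
  rcases eq_or_lt_of_le ht with h | h
  · rw [← h, Real.sign_zero, abs_zero, Real.zero_rpow hq.ne', mul_zero]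
  · rw [Real.sign_of_pos h, abs_of_pos h, mul_one]

private lemma f_of_nonpos {q t : ℝ} (hq : 0 < q) (ht : t ≤ 0) :
    |t| ^ q * Real.sign t = -((-t) ^ q) := by
  rcases eq_or_lt_of_le ht with h | h
  · rw [h, Real.sign_zero, abs_zero, Real.zero_rpow hq.ne', neg_zero,
      Real.zero_rpow hq.ne', neg_zero, mul_zero]
  · rw [Real.sign_of_neg h, abs_of_neg h, mul_neg_one]

private lemma real_add_rpow {q : ℝ} (hq : 1 ≤ q) {a b : ℝ} (ha : 0 ≤ a) (hb : 0 ≤ b) :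
    a ^ q + b ^ q ≤ (a + b) ^ q := by
  have h := NNReal.add_rpow_le_rpow_add a.toNNReal b.toNNReal hq
  have h' := NNReal.coe_le_coe.2 h
  rw [NNReal.coe_add, NNReal.coe_rpow, NNReal.coe_rpow, NNReal.coe_rpow, NNReal.coe_add,
    Real.coe_toNNReal a ha, Real.coe_toNNReal b hb] at h'
  exact h'

private lemma real_rpow_add {q : ℝ} (hq : 1 ≤ q) {a b : ℝ} (ha : 0 ≤ a) (hb : 0 ≤ b) :
    (a + b) ^ q ≤ 2 ^ (q - 1) * (a ^ q + b ^ q) := by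
  have h := NNReal.rpow_add_le_mul_rpow_add_rpow a.toNNReal b.toNNReal hq
  have h' := NNReal.coe_le_coe.2 h
  push_cast [NNReal.coe_rpow] at h'
  rw [Real.coe_toNNReal a ha, Real.coe_toNNReal b hb] at h'
  exact h'

private lemma key_nonneg {q : ℝ} (hq : 1 ≤ q) {u v : ℝ} (hu : 0 ≤ u) (huv : u ≤ v) :
    (v - u) ^ q ≤ 2 ^ (q - 1) * v ^ q - 2 ^ (q - 1) * u ^ q := by
  have hv : 0 ≤ v := hu.trans huv
  have h1 : (v - u) ^ q + u ^ q ≤ v ^ q := by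
    have := real_add_rpow hq (by linarith : (0:ℝ) ≤ v - u) hu
    rwa [sub_add_cancel] at this
  have h2 : u ^ q ≤ v ^ q := Real.rpow_le_rpow hu huv (by linarith)
  have h3 : (1 : ℝ) ≤ 2 ^ (q - 1) := Real.one_le_rpow (by norm_num) (by linarith)
  have h4 : (0:ℝ) ≤ (2 ^ (q - 1) - 1) * (v ^ q - u ^ q) :=
    mul_nonneg (by linarith) (by linarith)
  nlinarith

private lemma key_pointwise {q : ℝ} (hq : 1 ≤ q) {a b : ℝ} (hab : a ≤ b) :
    |a - b| ^ q ≤ 2 ^ (q - 1) * (|b| ^ q * Real.sign b)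
      - 2 ^ (q - 1) * (|a| ^ q * Real.sign a) := by
  have hq0 : (0:ℝ) < q := lt_of_lt_of_le one_pos hq
  rw [abs_sub_comm, abs_of_nonneg (by linarith : (0:ℝ) ≤ b - a)]
  rcases le_or_gt 0 a with ha | ha
  · rw [f_of_nonneg hq0 ha, f_of_nonneg hq0 (ha.trans hab)]
    exact key_nonneg hq ha hab
  · rcases le_or_gt b 0 with hb | hb
    · rw [f_of_nonpos hq0 hb, f_of_nonpos hq0 ha.le]
      have := key_nonneg hq (by linarith : (0:ℝ) ≤ -b) (by linarith : -b ≤ -a)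
      have hrw : -a - -b = b - a := by ring
      rw [hrw] at this
      linarith
    · rw [f_of_nonneg hq0 hb.le, f_of_nonpos hq0 ha.le]
      have := real_rpow_add hq hb.le (by linarith : (0:ℝ) ≤ -a)
      have hrw : b + -a = b - a := by ring
      rw [hrw] at this
      linarith

theorem stmt_2 (n : ℕ) (D : Set (Fin n → ℝ)) (hD : MeasurableSet D)
    (p : ℝ≥0∞) (hp : 1 ≤ p) (hp' : p ≠ ⊤)
    (x y : Lp ℝ p (volume.restrict D))
    (hxy : ∀ᵐ ξ ∂(volume.restrict D), x ξ ≤ y ξ) :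
    0 ≤ ‖x - y‖ ^ p.toReal ∧
      ‖x - y‖ ^ p.toReal ≤
        (2 ^ (p.toReal - 1) * ∫ z, |y z| ^ p.toReal * Real.sign (y z) ∂(volume.restrict D))
        - (2 ^ (p.toReal - 1) * ∫ z, |x z| ^ p.toReal * Real.sign (x z) ∂(volume.restrict D)) := by
  set q := p.toReal with hqdef
  have hp0 : p ≠ 0 := (zero_lt_one.trans_le hp).ne'
  have hq1 : 1 ≤ q := by
    rw [← ENNReal.toReal_one]
    exact ENNReal.toReal_mono hp' hp
  have hq0 : 0 < q := lt_of_lt_of_le one_pos hq1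
  constructor
  · rw [Lp.norm_def]
    exact Real.rpow_nonneg ENNReal.toReal_nonneg _
  -- measurability of t ↦ |t|^q * sign t
  have hfmeas : Measurable fun t : ℝ => |t| ^ q * Real.sign t :=
    ((measurable_id.abs).pow_const q).mul measurable_realSign
  -- integrability of the sign integrands
  have hInt : ∀ g : Lp ℝ p (volume.restrict D), Integrable (fun z => |g z| ^ q * Real.sign (g z)) (volume.restrict D) := by
    intro g
    have hg : MemLp g p (volume.restrict D) := Lp.memLp g
    have hnorm : Integrable (fun z => ‖g z‖ ^ q) (volume.restrict D) := hg.integrable_norm_rpow hp0 hp'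
    refine hnorm.mono' ?_ ?_
    · exact (hfmeas.comp_aemeasurable hg.aestronglyMeasurable.aemeasurable).aestronglyMeasurable
    · filter_upwards with z
      calc ‖|g z| ^ q * Real.sign (g z)‖
          = |g z| ^ q * |Real.sign (g z)| := by
            rw [Real.norm_eq_abs, abs_mul, abs_of_nonneg (Real.rpow_nonneg (abs_nonneg _) _)]
        _ ≤ |g z| ^ q * 1 :=
            mul_le_mul_of_nonneg_left (abs_sign_le_one _) (Real.rpow_nonneg (abs_nonneg _) _)
        _ = ‖g z‖ ^ q := by rw [mul_one, Real.norm_eq_abs]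
  have hxymem : MemLp (⇑(x - y)) p (volume.restrict D) := Lp.memLp _
  have hInonneg : (0:ℝ) ≤ ∫ z, ‖(x - y) z‖ ^ q ∂(volume.restrict D) :=
    integral_nonneg fun z => Real.rpow_nonneg (norm_nonneg _) _
  have hnorm : ‖x - y‖ ^ q = ∫ z, ‖(x - y) z‖ ^ q ∂(volume.restrict D) := by
    rw [Lp.norm_def, hxymem.eLpNorm_eq_integral_rpow_norm hp0 hp',
      ENNReal.toReal_ofReal (Real.rpow_nonneg hInonneg _), ← Real.rpow_mul hInonneg,
      inv_mul_cancel₀ hq0.ne', Real.rpow_one]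
  have hsub : ∀ᵐ z ∂(volume.restrict D), ‖(x - y) z‖ ^ q = |x z - y z| ^ q := by
    filter_upwards [Lp.coeFn_sub x y] with z hz
    rw [hz, Pi.sub_apply, Real.norm_eq_abs]
  have hL : Integrable (fun z => |x z - y z| ^ q) (volume.restrict D) :=
    (hxymem.integrable_norm_rpow hp0 hp').congr hsub
  have hmono : ∫ z, |x z - y z| ^ q ∂(volume.restrict D) ≤
      ∫ z, (2 ^ (q - 1) * (|y z| ^ q * Real.sign (y z))
        - 2 ^ (q - 1) * (|x z| ^ q * Real.sign (x z))) ∂(volume.restrict D) := by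
    refine integral_mono_ae hL (((hInt y).const_mul _).sub ((hInt x).const_mul _)) ?_
    filter_upwards [hxy] with z hz
    exact key_pointwise hq1 hz
  rw [integral_sub ((hInt y).const_mul _) ((hInt x).const_mul _), integral_const_mul,
    integral_const_mul] at hmono
  rw [hnorm, integral_congr_ae hsub]
  exact hmono
end

section
/- Let (E, 𝓔) be a measurable space, Q a Markov kernel on E, and 𝒱 : E → [1,∞) measurable with Q𝒱 ≤ λ𝒱 + K for some λ ∈ (0,1) and K > 0. Fix M > max(K/(1−λ), 1) and set r := (λ + K/M)^{-1} > 1. Let (Z_n) be a Markov chain with kernel Q and τ_C := inf{n ≥ 1 : Z_n ∈ C} for C := {𝒱 ≤ M}. Then for any starting point x ∉ C, E_x[r^{τ_C}] ≤ 𝒱(x), and for any starting point x ∈ C, E_x[r^{τ_C}] ≤ r·(Q𝒱)(x). -/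
open MeasureTheory ProbabilityTheory


lemma aux_map_bind {E : Type*} [MeasurableSpace E] {Ω : Type*} [MeasurableSpace Ω]
    (μ : Measure Ω) [IsProbabilityMeasure μ]
    (Q : Kernel E E) [IsMarkovKernel Q]
    (Z : ℕ → Ω → E) (hZmeas : ∀ n, Measurable (Z n)) (n : ℕ)
    (hMark : ∀ (A : Set E), MeasurableSet A →
      (μ[fun ω => Set.indicator A (fun _ => (1 : ℝ)) (Z (n + 1) ω) |
          MeasurableSpace.comap (fun ω (i : Fin (n + 1)) => Z i ω) inferInstance])
        =ᵐ[μ] fun ω => (Q (Z n ω) A).toReal)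
    (A : Set Ω)
    (hA : MeasurableSet[MeasurableSpace.comap (fun ω (i : Fin (n + 1)) => Z i ω) inferInstance] A) :
    Measure.map (Z (n+1)) (μ.restrict A) = Measure.bind (μ.restrict A) (fun ω => Q (Z n ω)) := by
  have hle : (MeasurableSpace.comap (fun ω (i : Fin (n + 1)) => Z i ω) inferInstance) ≤ ‹MeasurableSpace Ω› :=
    Measurable.comap_le (measurable_pi_lambda _ fun i => hZmeas i)
  have hA0 : MeasurableSet A := hle _ hA
  haveI : SigmaFinite (μ.trim hle) := by infer_instance
  ext B hB
  have hQmeas : Measurable fun ω => Q (Z n ω) B := (Q.measurable_coe hB).comp (hZmeas n)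
  have hQle1 : ∀ ω, Q (Z n ω) B ≤ 1 := fun ω => prob_le_one
  -- integrability of indicator
  have hind : Integrable (fun ω => Set.indicator B (fun _ => (1:ℝ)) (Z (n+1) ω)) μ := by
    have : (fun ω => Set.indicator B (fun _ => (1:ℝ)) (Z (n+1) ω))
        = Set.indicator ((Z (n+1)) ⁻¹' B) (fun _ => (1:ℝ)) := by
      rfl
    rw [this]
    exact (integrable_const (1:ℝ)).indicator ((hZmeas (n+1)) hB)
  have h1 : ∫ ω in A, (Q (Z n ω) B).toReal ∂μ
      = ∫ ω in A, Set.indicator B (fun _ => (1:ℝ)) (Z (n+1) ω) ∂μ := by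
    rw [← setIntegral_condExp hle hind hA]
    exact setIntegral_congr_ae hA0 ((hMark B hB).mono fun ω h _ => h.symm)
  -- convert LHS of h1 to lintegral
  have h2 : ∫ ω in A, (Q (Z n ω) B).toReal ∂μ = (∫⁻ ω in A, Q (Z n ω) B ∂μ).toReal := by
    apply integral_toReal hQmeas.aemeasurable
    exact Filter.Eventually.of_forall fun ω => lt_of_le_of_lt (hQle1 ω) ENNReal.one_lt_top
  have h3 : ∫ ω in A, Set.indicator B (fun _ => (1:ℝ)) (Z (n+1) ω) ∂μ
      = (μ.restrict A ((Z (n+1)) ⁻¹' B)).toReal := by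
    have he : (fun ω => Set.indicator B (fun _ => (1:ℝ)) (Z (n+1) ω))
        = Set.indicator ((Z (n+1)) ⁻¹' B) (fun _ => (1:ℝ)) := by
      rfl
    rw [he, integral_indicator_const (1:ℝ) ((hZmeas (n+1)) hB)]
    simp
    rfl
  have hfin1 : (∫⁻ ω in A, Q (Z n ω) B ∂μ) ≠ ⊤ := by
    refine ne_top_of_le_ne_top (by simp : (μ.restrict A) Set.univ ≠ ⊤) ?_
    calc ∫⁻ ω in A, Q (Z n ω) B ∂μ ≤ ∫⁻ _ in A, 1 ∂μ := lintegral_mono fun ω => hQle1 ω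
    _ = (μ.restrict A) Set.univ := by simp
  have hm2 : Measurable fun ω => Q (Z n ω) := Q.measurable.comp (hZmeas n)
  rw [Measure.map_apply (hZmeas (n+1)) hB, Measure.bind_apply hB hm2.aemeasurable]
  have h4 := h1.trans h3
  rw [h2] at h4
  have hfin2 : (μ.restrict A ((Z (n+1)) ⁻¹' B)) ≠ ⊤ := measure_ne_top _ _
  have h5 : (μ.restrict A) ((Z (n+1)) ⁻¹' B) = ∫⁻ ω in A, Q (Z n ω) B ∂μ :=
    ((ENNReal.toReal_eq_toReal_iff' hfin2 hfin1).mp h4.symm)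
  exact h5

lemma aux_lintegral {E : Type*} [MeasurableSpace E] {Ω : Type*} [MeasurableSpace Ω]
    (μ : Measure Ω) [IsProbabilityMeasure μ]
    (Q : Kernel E E) [IsMarkovKernel Q]
    (Z : ℕ → Ω → E) (hZmeas : ∀ n, Measurable (Z n)) (n : ℕ)
    (hMark : ∀ (A : Set E), MeasurableSet A →
      (μ[fun ω => Set.indicator A (fun _ => (1 : ℝ)) (Z (n + 1) ω) |
          MeasurableSpace.comap (fun ω (i : Fin (n + 1)) => Z i ω) inferInstance])
        =ᵐ[μ] fun ω => (Q (Z n ω) A).toReal)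
    (A : Set Ω)
    (hA : MeasurableSet[MeasurableSpace.comap (fun ω (i : Fin (n + 1)) => Z i ω) inferInstance] A)
    (g : E → ENNReal) (hg : Measurable g) :
    ∫⁻ ω in A, g (Z (n+1) ω) ∂μ = ∫⁻ ω in A, ∫⁻ y, g y ∂(Q (Z n ω)) ∂μ := by
  have hm2 : Measurable fun ω => Q (Z n ω) := Q.measurable.comp (hZmeas n)
  rw [← lintegral_map hg (hZmeas (n+1)), aux_map_bind μ Q Z hZmeas n hMark A hA,
    Measure.lintegral_bind hm2.aemeasurable hg.aemeasurable]

theorem stmt_8 {E : Type*} [MeasurableSpace E]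
    (Q : Kernel E E) [IsMarkovKernel Q]
    (V : E → ℝ) (hVmeas : Measurable V) (hV1 : ∀ x, 1 ≤ V x)
    (hVint : ∀ x, Integrable V (Q x))
    (lam K : ℝ) (hlam : lam ∈ Set.Ioo (0 : ℝ) 1) (hK : 0 < K)
    (hdrift : ∀ x, ∫ y, V y ∂(Q x) ≤ lam * V x + K)
    (M r : ℝ) (hM : max (K / (1 - lam)) 1 < M) (hr : r = (lam + K / M)⁻¹)
    {Ω : Type*} [MeasurableSpace Ω] (μ : Measure Ω) [IsProbabilityMeasure μ]
    (Z : ℕ → Ω → E) (hZmeas : ∀ n, Measurable (Z n))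
    (hMarkov : ∀ (n : ℕ) (A : Set E), MeasurableSet A →
      (μ[fun ω => Set.indicator A (fun _ => (1 : ℝ)) (Z (n + 1) ω) |
          MeasurableSpace.comap (fun ω (i : Fin (n + 1)) => Z i ω) inferInstance])
        =ᵐ[μ] fun ω => (Q (Z n ω) A).toReal)
    (x : E) (hZ0 : ∀ ω, Z 0 ω = x) :
    -- expected value of `r ^ τ_C` where `C = {V ≤ M}` and
    -- `τ_C = inf {n ≥ 1 : Z n ∈ C}` (the supremum below equals `r ^ τ_C`, with value `∞`
    -- when the chain never returns to `C`, since `r > 1`)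
    (¬ V x ≤ M →
      ∫⁻ ω, ⨆ n : ℕ,
          (if (n : ℕ∞) ≤ ⨅ (m : ℕ) (_ : 1 ≤ m ∧ V (Z m ω) ≤ M), (m : ℕ∞)
            then ENNReal.ofReal r ^ n else 0) ∂μ
        ≤ ENNReal.ofReal (V x)) ∧
    (V x ≤ M →
      ∫⁻ ω, ⨆ n : ℕ,
          (if (n : ℕ∞) ≤ ⨅ (m : ℕ) (_ : 1 ≤ m ∧ V (Z m ω) ≤ M), (m : ℕ∞)
            then ENNReal.ofReal r ^ n else 0) ∂μ
        ≤ ENNReal.ofReal (r * ∫ y, V y ∂(Q x))) := by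
  obtain ⟨hlam0, hlam1⟩ := hlam
  have hM1 : (1:ℝ) < M := lt_of_le_of_lt (le_max_right _ _) hM
  have hM0 : (0:ℝ) < M := lt_trans one_pos hM1
  have hKM0 : 0 < lam + K / M := by positivity
  have hKM1 : lam + K / M < 1 := by
    have h1 : K / (1 - lam) < M := lt_of_le_of_lt (le_max_left _ _) hM
    have h2 : K / M < 1 - lam := by
      rw [div_lt_iff₀ hM0]
      rw [div_lt_iff₀ (by linarith)] at h1
      nlinarith
    linarith
  have hr1 : 1 < r := by
    rw [hr]
    exact one_lt_inv_iff₀.mpr ⟨hKM0, hKM1⟩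
  have hr0 : (0:ℝ) < r := lt_trans one_pos hr1
  set R := ENNReal.ofReal r with hRdef
  have hR1 : 1 < R := by
    rw [hRdef, ← ENNReal.ofReal_one]
    exact (ENNReal.ofReal_lt_ofReal_iff hr0).mpr hr1
  have hRne0 : R ≠ 0 := (lt_trans zero_lt_one hR1).ne'
  have hRnetop : R ≠ ⊤ := ENNReal.ofReal_ne_top
  have hRinv : R⁻¹ = ENNReal.ofReal (lam + K / M) := by
    rw [hRdef, hr, ← ENNReal.ofReal_inv_of_pos (by positivity), inv_inv]
  have hRinvlt1 : R⁻¹ < 1 := ENNReal.inv_lt_one.mpr hR1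
  set W : E → ENNReal := fun y => ENNReal.ofReal (V y) with hWdef
  have hWmeas : Measurable W := ENNReal.measurable_ofReal.comp hVmeas
  have hW1 : ∀ y, 1 ≤ W y := fun y => ENNReal.one_le_ofReal.mpr (hV1 y)
  set A : ℕ → Set Ω := fun n => {ω | ∀ m, 1 ≤ m → m ≤ n → M < V (Z m ω)} with hAdef
  have hAF : ∀ n, MeasurableSet[MeasurableSpace.comap
      (fun ω (i : Fin (n + 1)) => Z i ω) inferInstance] (A n) := by
    intro n
    have heq : A n = ⋂ (m : ℕ), ⋂ (_ : 1 ≤ m ∧ m ≤ n), (Z m) ⁻¹' {y | M < V y} := by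
      ext ω
      simp only [hAdef, Set.mem_setOf_eq, Set.mem_iInter, Set.mem_preimage, and_imp]
    rw [heq]
    refine MeasurableSet.iInter fun m => MeasurableSet.iInter fun hm => ?_
    exact MeasurableSpace.measurableSet_comap.mpr
      ⟨(fun g : Fin (n+1) → E => g ⟨m, by omega⟩) ⁻¹' {y | M < V y},
        (measurable_pi_apply _) (measurableSet_lt measurable_const hVmeas), rfl⟩
  have hle : ∀ n, (MeasurableSpace.comap (fun ω (i : Fin (n + 1)) => Z i ω) inferInstance)
      ≤ ‹MeasurableSpace Ω› :=
    fun n => Measurable.comap_le (measurable_pi_lambda _ fun i => hZmeas i)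
  have hAmeas : ∀ n, MeasurableSet (A n) := fun n => hle n _ (hAF n)
  have hA0 : A 0 = Set.univ := by
    ext ω; simp only [hAdef, Set.mem_setOf_eq, Set.mem_univ, iff_true]
    intro m h1 h2; omega
  have hAsucc : ∀ n, A (n+1) = A n ∩ {ω | M < V (Z (n+1) ω)} := by
    intro n
    ext ω
    simp only [hAdef, Set.mem_setOf_eq, Set.mem_inter_iff]
    constructor
    · intro h
      exact ⟨fun m h1 h2 => h m h1 (by omega), h (n+1) (by omega) le_rfl⟩
    · rintro ⟨h1, h2⟩ m hm1 hm2
      rcases Nat.lt_or_ge m (n+1) with h | h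
      · exact h1 m hm1 (by omega)
      · have hmeq : m = n+1 := by omega
        rw [hmeq]; exact h2
  set D : ℕ → Set Ω := fun n => A n ∩ {ω | V (Z (n+1) ω) ≤ M} with hDdef
  have hDmeas : ∀ n, MeasurableSet (D n) :=
    fun n => (hAmeas n).inter ((hZmeas (n+1)) (measurableSet_le hVmeas measurable_const))
  set b : ℕ → ENNReal := fun n => ∫⁻ ω in A n, W (Z n ω) ∂μ with hbdef
  have hb0 : b 0 = ENNReal.ofReal (V x) := by
    rw [hbdef]
    simp only [hA0, Measure.restrict_univ]
    have : ∀ ω, W (Z 0 ω) = ENNReal.ofReal (V x) := fun ω => by rw [hZ0 ω]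
    rw [lintegral_congr this, lintegral_const, measure_univ, mul_one]
  -- drift bound
  have hQW : ∀ y, M < V y → ∫⁻ z, W z ∂(Q y) ≤ R⁻¹ * W y := by
    intro y hy
    have h0 : ∫⁻ z, W z ∂(Q y) = ENNReal.ofReal (∫ z, V z ∂(Q y)) :=
      (ofReal_integral_eq_lintegral_ofReal (hVint y)
        (Filter.Eventually.of_forall fun z => le_trans zero_le_one (hV1 z))).symm
    rw [h0, hRinv]
    have h2 : lam * V y + K ≤ (lam + K / M) * V y := by
      have hKM : K / M * M ≤ K / M * V y := mul_le_mul_of_nonneg_left hy.le (by positivity)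
      rw [div_mul_cancel₀ K hM0.ne'] at hKM
      nlinarith
    calc ENNReal.ofReal (∫ z, V z ∂(Q y)) ≤ ENNReal.ofReal ((lam + K/M) * V y) :=
      ENNReal.ofReal_le_ofReal (le_trans (hdrift y) h2)
    _ = ENNReal.ofReal (lam + K/M) * W y := ENNReal.ofReal_mul hKM0.le
  -- splitting A n
  have hsplit : ∀ n, μ (D n) + b (n+1) ≤ ∫⁻ ω in A n, W (Z (n+1) ω) ∂μ := by
    intro n
    have h1 : μ (D n) ≤ ∫⁻ ω in D n, W (Z (n+1) ω) ∂μ := by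
      rw [← setLIntegral_one]
      exact setLIntegral_mono (hWmeas.comp (hZmeas (n+1))) fun ω _ => hW1 _
    have h2 : b (n+1) = ∫⁻ ω in A n ∩ {ω | M < V (Z (n+1) ω)}, W (Z (n+1) ω) ∂μ := by
      rw [hbdef]
      simp only
      rw [hAsucc n]
    have h3 : Disjoint (D n) (A n ∩ {ω | M < V (Z (n+1) ω)}) := by
      refine Set.disjoint_left.mpr ?_
      rintro ω ⟨-, h1'⟩ ⟨-, h2'⟩
      have h2'' : M < V (Z (n+1) ω) := h2'
      have h1'' : V (Z (n+1) ω) ≤ M := h1'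
      exact absurd h2'' (not_lt.mpr h1'')
    have hBmeas : MeasurableSet (A n ∩ {ω | M < V (Z (n+1) ω)}) :=
      (hAmeas n).inter ((hZmeas (n+1)) (measurableSet_lt measurable_const hVmeas))
    have h4 : D n ∪ (A n ∩ {ω | M < V (Z (n+1) ω)}) = A n := by
      rw [hDdef]
      simp only
      rw [← Set.inter_union_distrib_left]
      refine Set.inter_eq_left.mpr fun ω _ => ?_
      simp only [Set.mem_union, Set.mem_setOf_eq]
      exact le_or_gt (V (Z (n+1) ω)) M
    calc μ (D n) + b (n+1)
        ≤ ∫⁻ ω in D n, W (Z (n+1) ω) ∂μ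
          + ∫⁻ ω in A n ∩ {ω | M < V (Z (n+1) ω)}, W (Z (n+1) ω) ∂μ :=
          add_le_add h1 (le_of_eq h2)
    _ = ∫⁻ ω in D n ∪ (A n ∩ {ω | M < V (Z (n+1) ω)}), W (Z (n+1) ω) ∂μ :=
          (lintegral_union hBmeas h3).symm
    _ = ∫⁻ ω in A n, W (Z (n+1) ω) ∂μ := by rw [h4]
  -- one-step inequality
  have hstep : ∀ n, (1 ≤ n ∨ ¬ V x ≤ M) → μ (D n) + b (n+1) ≤ R⁻¹ * b n := by
    intro n hn
    refine le_trans (hsplit n) ?_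
    have heq := aux_lintegral μ Q Z hZmeas n (hMarkov n) (A n) (hAF n) W hWmeas
    rw [heq]
    have hpt : ∀ ω ∈ A n, ∫⁻ y, W y ∂(Q (Z n ω)) ≤ R⁻¹ * W (Z n ω) := by
      intro ω hω
      rcases Nat.eq_zero_or_pos n with h0 | h1
      · subst h0
        apply hQW
        rw [hZ0 ω]
        rcases hn with h | h
        · omega
        · exact not_le.mp h
      · exact hQW _ (hω n h1 le_rfl)
    calc ∫⁻ ω in A n, ∫⁻ y, W y ∂(Q (Z n ω)) ∂μ
        ≤ ∫⁻ ω in A n, R⁻¹ * W (Z n ω) ∂μ :=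
          setLIntegral_mono (measurable_const.mul (hWmeas.comp (hZmeas n))) hpt
    _ = R⁻¹ * b n := lintegral_const_mul _ (hWmeas.comp (hZmeas n))
  have hstepR : ∀ n, (1 ≤ n ∨ ¬ V x ≤ M) →
      R^(n+1) * μ (D n) + R^(n+1) * b (n+1) ≤ R^n * b n := by
    intro n hn
    calc R^(n+1) * μ (D n) + R^(n+1) * b (n+1) = R^(n+1) * (μ (D n) + b (n+1)) := by ring
    _ ≤ R^(n+1) * (R⁻¹ * b n) := mul_le_mul_right (hstep n hn) _
    _ = R^n * b n := by
        rw [pow_succ, mul_assoc, ← mul_assoc R R⁻¹, ENNReal.mul_inv_cancel hRne0 hRnetop, one_mul]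
  have hpartial : ∀ n0, (1 ≤ n0 ∨ ¬ V x ≤ M) → ∀ N,
      (∑ k ∈ Finset.range N, R^(k+n0+1) * μ (D (k+n0))) + R^(N+n0) * b (N+n0)
        ≤ R^n0 * b n0 := by
    intro n0 hn0 N
    induction N with
    | zero => simp
    | succ N ih =>
      rw [Finset.sum_range_succ, show N+1+n0 = N+n0+1 from by omega, add_assoc]
      have hside : (1 ≤ N+n0 ∨ ¬ V x ≤ M) := by
        rcases hn0 with h | h
        · exact Or.inl (by omega)
        · exact Or.inr h
      calc (∑ k ∈ Finset.range N, R^(k+n0+1) * μ (D (k+n0)))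
            + (R^(N+n0+1) * μ (D (N+n0)) + R^(N+n0+1) * b (N+n0+1))
          ≤ (∑ k ∈ Finset.range N, R^(k+n0+1) * μ (D (k+n0))) + R^(N+n0) * b (N+n0) :=
          add_le_add_right (hstepR (N+n0) hside) _
      _ ≤ R^n0 * b n0 := ih
  have htsum : ∀ n0, (1 ≤ n0 ∨ ¬ V x ≤ M) →
      ∑' k, R^(k+n0+1) * μ (D (k+n0)) ≤ R^n0 * b n0 := by
    intro n0 hn0
    rw [ENNReal.tsum_eq_iSup_nat]
    exact iSup_le fun N => le_trans le_self_add (hpartial n0 hn0 N)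
  -- finiteness / value of E[W(Z1)]
  have hZ1 : ∫⁻ ω, W (Z 1 ω) ∂μ = ENNReal.ofReal (∫ y, V y ∂(Q x)) := by
    have heq := aux_lintegral μ Q Z hZmeas 0 (hMarkov 0) Set.univ MeasurableSet.univ W hWmeas
    simp only [zero_add, Measure.restrict_univ] at heq
    rw [heq]
    have hc : ∀ ω, ∫⁻ y, W y ∂(Q (Z 0 ω)) = ∫⁻ y, W y ∂(Q x) := fun ω => by rw [hZ0 ω]
    rw [lintegral_congr hc, lintegral_const, measure_univ, mul_one]
    exact (ofReal_integral_eq_lintegral_ofReal (hVint x)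
      (Filter.Eventually.of_forall fun z => le_trans zero_le_one (hV1 z))).symm
  have hb1fin : b 1 ≠ ⊤ := by
    have hle1 : b 1 ≤ ∫⁻ ω, W (Z 1 ω) ∂μ := setLIntegral_le_lintegral _ _
    rw [hZ1] at hle1
    exact ne_top_of_le_ne_top ENNReal.ofReal_ne_top hle1
  -- the never-return set is null
  have hAinf : μ (⋂ n, A n) = 0 := by
    have hbb : ∀ N : ℕ, R^(N+1) * b (N+1) ≤ R * b 1 := by
      intro N
      have hp := hpartial 1 (Or.inl le_rfl) N
      rw [pow_one] at hp
      exact le_trans le_add_self hp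
    have hMA : ∀ N : ℕ, ENNReal.ofReal M * μ (⋂ n, A n) ≤ b (N+1) := by
      intro N
      calc ENNReal.ofReal M * μ (⋂ n, A n)
          ≤ ENNReal.ofReal M * μ (A (N+1)) :=
            mul_le_mul_right (measure_mono (Set.iInter_subset _ _)) _
      _ = ∫⁻ _ in A (N+1), ENNReal.ofReal M ∂μ := by rw [setLIntegral_const]
      _ ≤ ∫⁻ ω in A (N+1), W (Z (N+1) ω) ∂μ :=
          setLIntegral_mono (hWmeas.comp (hZmeas (N+1))) fun ω hω =>
            ENNReal.ofReal_le_ofReal (hω (N+1) (by omega) le_rfl).le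
      _ = b (N+1) := rfl
    have hkey : ∀ N : ℕ, ENNReal.ofReal M * μ (⋂ n, A n) ≤ (R⁻¹)^(N+1) * (R * b 1) := by
      intro N
      have h1 : R^(N+1) * (ENNReal.ofReal M * μ (⋂ n, A n)) ≤ R * b 1 :=
        le_trans (mul_le_mul_right (hMA N) _) (hbb N)
      have h2 : (R⁻¹)^(N+1) * (R^(N+1) * (ENNReal.ofReal M * μ (⋂ n, A n)))
          = ENNReal.ofReal M * μ (⋂ n, A n) := by
        rw [← mul_assoc, ← mul_pow, ENNReal.inv_mul_cancel hRne0 hRnetop, one_pow, one_mul]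
      calc ENNReal.ofReal M * μ (⋂ n, A n)
          = (R⁻¹)^(N+1) * (R^(N+1) * (ENNReal.ofReal M * μ (⋂ n, A n))) := h2.symm
      _ ≤ (R⁻¹)^(N+1) * (R * b 1) := mul_le_mul_right h1 _
    have htend : Filter.Tendsto (fun N : ℕ => (R⁻¹)^(N+1) * (R * b 1))
        Filter.atTop (nhds 0) := by
      have h1 : Filter.Tendsto (fun N : ℕ => (R⁻¹)^(N+1)) Filter.atTop (nhds 0) :=
        (ENNReal.tendsto_pow_atTop_nhds_zero_of_lt_one hRinvlt1).comp
          (Filter.tendsto_add_atTop_nat 1)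
      have h2 := ENNReal.Tendsto.mul_const h1 (Or.inr (ENNReal.mul_ne_top hRnetop hb1fin))
      simpa using h2
    have hfinal : ENNReal.ofReal M * μ (⋂ n, A n) ≤ 0 :=
      ge_of_tendsto htend (Filter.Eventually.of_forall hkey)
    have hz := le_antisymm hfinal zero_le
    rcases mul_eq_zero.mp hz with h | h
    · refine absurd h ?_
      simp only [ne_eq, ENNReal.ofReal_eq_zero, not_le]
      linarith
    · exact h
  -- value of the integrand on D k
  have hDk : ∀ k, ∀ ω ∈ D k,
      (⨆ n : ℕ, if (n : ℕ∞) ≤ ⨅ (m : ℕ) (_ : 1 ≤ m ∧ V (Z m ω) ≤ M), (m : ℕ∞)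
        then R ^ n else 0) = R^(k+1) := by
    intro k ω hω
    have htau : (⨅ (m : ℕ) (_ : 1 ≤ m ∧ V (Z m ω) ≤ M), (m : ℕ∞)) = ((k+1 : ℕ) : ℕ∞) := by
      apply le_antisymm
      · exact iInf_le_of_le (k+1) (iInf_le_of_le ⟨by omega, hω.2⟩ le_rfl)
      · refine le_iInf fun m => le_iInf fun hm => ?_
        have hkm : k+1 ≤ m := by
          by_contra h
          push_neg at h
          exact absurd hm.2 (not_le.mpr (hω.1 m hm.1 (by omega)))
        exact_mod_cast hkm
    rw [htau]
    apply le_antisymm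
    · refine iSup_le fun n => ?_
      split_ifs with h
      · exact pow_le_pow_right₀ hR1.le (by exact_mod_cast h)
      · exact zero_le
    · refine le_iSup_of_le (k+1) ?_
      rw [if_pos le_rfl]
  have hcover : (⋂ n, A n)ᶜ = ⋃ k, D k := by
    classical
    ext ω
    simp only [Set.mem_compl_iff, Set.mem_iInter, Set.mem_iUnion]
    constructor
    · intro h
      push_neg at h
      obtain ⟨n, hn⟩ := h
      have hex : ∃ m, 1 ≤ m ∧ V (Z m ω) ≤ M := by
        by_contra hc
        push_neg at hc
        exact hn fun m h1 _ => hc m h1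
      have hspec := Nat.find_spec hex
      have hm1 : 1 ≤ Nat.find hex := hspec.1
      refine ⟨Nat.find hex - 1, ?_, ?_⟩
      · intro j hj1 hj2
        by_contra hc
        exact Nat.find_min hex (by omega) ⟨hj1, not_lt.mp hc⟩
      · show V (Z (Nat.find hex - 1 + 1) ω) ≤ M
        have heq : Nat.find hex - 1 + 1 = Nat.find hex := by omega
        rw [heq]
        exact hspec.2
    · rintro ⟨k, hk⟩ hall
      exact absurd (hall (k+1) (k+1) (by omega) le_rfl) (not_lt.mpr hk.2)
  have hdisjkey : ∀ i j : ℕ, i < j → Disjoint (D i) (D j) := by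
    intro i j hij
    rw [Set.disjoint_left]
    intro ω hωi hωj
    exact absurd (hωj.1 (i+1) (by omega) (by omega)) (not_lt.mpr hωi.2)
  have hdisj : Pairwise (Function.onFun Disjoint D) := fun i j h =>
    (lt_or_gt_of_ne h).elim (hdisjkey _ _) (fun hh => (hdisjkey _ _ hh).symm)
  -- the main computation of the integral
  have hlil : ∫⁻ ω, (⨆ n : ℕ,
      if (n : ℕ∞) ≤ ⨅ (m : ℕ) (_ : 1 ≤ m ∧ V (Z m ω) ≤ M), (m : ℕ∞)
        then R ^ n else 0) ∂μ = ∑' k, R^(k+1) * μ (D k) := by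
    have hinterM : MeasurableSet (⋂ n, A n) := MeasurableSet.iInter hAmeas
    rw [← lintegral_add_compl _ hinterM, setLIntegral_measure_zero _ _ hAinf, zero_add, hcover,
      lintegral_iUnion hDmeas hdisj]
    exact tsum_congr fun k => by
      rw [setLIntegral_congr_fun (hDmeas k)
        (fun ω hω => hDk k ω hω), setLIntegral_const]
  constructor
  · intro hx
    rw [hlil]
    have := htsum 0 (Or.inr hx)
    simp only [add_zero, pow_zero, one_mul] at this
    rw [← hb0]
    exact this
  · intro hx
    rw [hlil]
    have hsum1 := htsum 1 (Or.inl le_rfl)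
    rw [tsum_eq_zero_add' (f := fun k => R^(k+1) * μ (D k)) ENNReal.summable]
    have hmatch : ∑' k : ℕ, R^(k+1+1) * μ (D (k+1)) ≤ R^1 * b 1 := hsum1
    calc R^(0+1) * μ (D 0) + ∑' k : ℕ, R^(k+1+1) * μ (D (k+1))
        ≤ R^(0+1) * μ (D 0) + R^1 * b 1 := add_le_add_right hmatch _
    _ = R * (μ (D 0) + b 1) := by ring
    _ ≤ R * ∫⁻ ω, W (Z 1 ω) ∂μ := by
          refine mul_le_mul_right ?_ _
          have := hsplit 0
          rwa [hA0, Measure.restrict_univ] at this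
    _ = ENNReal.ofReal (r * ∫ y, V y ∂(Q x)) := by
          rw [hZ1, hRdef, ENNReal.ofReal_mul hr0.le]
end

section
/- Let (E, 𝓔) be a measurable space, Q a Markov kernel, and 𝒱 : E → [1,∞) with Q𝒱 ≤ λ𝒱 + K for λ ∈ (0,1), K > 0. Fix M > max(K/(1−λ),1), set r := (λ + K/M)^{-1}, and suppose A ∈ 𝓔 satisfies inf_{x ∈ {𝒱 ≤ M}} Q(x,A) ≥ ε for some ε > 0. Then for any 1 < l < r^{(|log(1−ε)| ∧ log M)/(2 log M)} there exists C = C(λ,l,K,M,ε) > 0 such that E_x[l^{τ_A}] ≤ C 𝒱(x) for all x ∈ E, where τ_A := inf{n ≥ 1 : Z_n ∈ A}. -/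
open MeasureTheory ProbabilityTheory
open scoped ENNReal
noncomputable section

namespace Stmt9Aux


variable {E : Type*} [MeasurableSpace E] {Ω : Type} [MeasurableSpace Ω]

/-- The filtration generated by `Z 0, ..., Z n`. -/
def Fn (Z : ℕ → Ω → E) (n : ℕ) : MeasurableSpace Ω :=
  MeasurableSpace.comap (fun ω (i : Fin (n + 1)) => Z i ω) inferInstance

lemma Fn_le (Z : ℕ → Ω → E) (hZ : ∀ n, Measurable (Z n)) (n : ℕ) :
    Fn Z n ≤ ‹MeasurableSpace Ω› :=
  Measurable.comap_le (measurable_pi_lambda _ fun i => hZ i)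

lemma measurable_Z_Fn (Z : ℕ → Ω → E) {n k : ℕ} (hk : k ≤ n) :
    Measurable[Fn Z n] (Z k) := by
  have h1 : Measurable[Fn Z n] (fun ω => (fun i : Fin (n + 1) => Z i ω)) :=
    Measurable.of_comap_le le_rfl
  exact (measurable_pi_apply (⟨k, Nat.lt_succ_of_le hk⟩ : Fin (n + 1))).comp h1

section Master

variable (Q : Kernel E E) (μ : Measure Ω) (Z : ℕ → Ω → E)

/-- The conditional-expectation hypothesis. -/
def CEhyp : Prop :=
  ∀ (n : ℕ) (B : Set E), MeasurableSet B →
    (μ[fun ω => Set.indicator B (fun _ => (1 : ℝ)) (Z (n + 1) ω) |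
        MeasurableSpace.comap (fun ω (i : Fin (n + 1)) => Z i ω) inferInstance])
      =ᵐ[μ] fun ω => (Q (Z n ω) B).toReal

variable [IsMarkovKernel Q] [IsProbabilityMeasure μ]

lemma masterA (hZ : ∀ n, Measurable (Z n)) (hCE : CEhyp Q μ Z)
    (n : ℕ) {s : Set Ω} (hs : MeasurableSet[Fn Z n] s) {B : Set E} (hB : MeasurableSet B) :
    ∫⁻ ω in s, Q (Z n ω) B ∂μ = μ (s ∩ Z (n + 1) ⁻¹' B) := by
  have hms : MeasurableSet s := Fn_le Z hZ n s hs
  have hpre : MeasurableSet (Z (n + 1) ⁻¹' B) := (hZ (n + 1)) hB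
  have hind : (fun ω => Set.indicator B (fun _ => (1 : ℝ)) (Z (n + 1) ω))
      = Set.indicator (Z (n + 1) ⁻¹' B) (fun _ => (1 : ℝ)) := by
    ext ω
    by_cases h : Z (n + 1) ω ∈ B <;>
      simp [Set.indicator_apply, Set.mem_preimage, h]
  have hint : Integrable (fun ω => Set.indicator B (fun _ => (1 : ℝ)) (Z (n + 1) ω)) μ := by
    rw [hind]
    exact (integrable_const (1 : ℝ)).indicator hpre
  have h1 := setIntegral_condExp (Fn_le Z hZ n) hint hs
  have h2 : ∫ ω in s, ((Q (Z n ω) B).toReal) ∂μ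
      = ∫ ω in s, Set.indicator B (fun _ => (1 : ℝ)) (Z (n + 1) ω) ∂μ := by
    rw [← h1]
    exact (integral_congr_ae (ae_restrict_of_ae (hCE n B hB))).symm
  have h3 : ∫ ω in s, Set.indicator B (fun _ => (1 : ℝ)) (Z (n + 1) ω) ∂μ
      = (μ (s ∩ Z (n + 1) ⁻¹' B)).toReal := by
    rw [hind, setIntegral_indicator hpre, setIntegral_const, smul_eq_mul, mul_one]
    rfl
  have hmeas : Measurable fun ω => Q (Z n ω) B := (Q.measurable_coe hB).comp (hZ n)
  have h4 : ∫ ω in s, ((Q (Z n ω) B).toReal) ∂μ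
      = (∫⁻ ω in s, Q (Z n ω) B ∂μ).toReal := by
    rw [integral_toReal hmeas.aemeasurable.restrict]
    exact ae_of_all _ fun ω => measure_lt_top _ _
  have hfin1 : ∫⁻ ω in s, Q (Z n ω) B ∂μ ≠ ∞ := by
    refine ne_of_lt (lt_of_le_of_lt ?_ (measure_lt_top μ s))
    calc ∫⁻ ω in s, Q (Z n ω) B ∂μ ≤ ∫⁻ _ in s, 1 ∂μ :=
          lintegral_mono fun ω => prob_le_one
      _ = μ s := setLIntegral_one s
  have hfin2 : μ (s ∩ Z (n + 1) ⁻¹' B) ≠ ∞ := measure_ne_top μ _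
  exact (ENNReal.toReal_eq_toReal_iff' hfin1 hfin2).mp (h4.symm.trans (h2.trans h3))

lemma masterB (hZ : ∀ n, Measurable (Z n)) (hCE : CEhyp Q μ Z)
    (n : ℕ) {φ : E → ℝ≥0∞} (hφ : Measurable φ) {s : Set Ω} (hs : MeasurableSet[Fn Z n] s) :
    ∫⁻ ω in s, φ (Z (n + 1) ω) ∂μ = ∫⁻ ω in s, ∫⁻ y, φ y ∂(Q (Z n ω)) ∂μ := by
  refine Measurable.ennreal_induction
    (motive := fun φ => ∫⁻ ω in s, φ (Z (n + 1) ω) ∂μ = ∫⁻ ω in s, ∫⁻ y, φ y ∂(Q (Z n ω)) ∂μ)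
    ?_ ?_ ?_ hφ
  · intro c B hB
    have hpre : MeasurableSet (Z (n + 1) ⁻¹' B) := (hZ (n + 1)) hB
    have hl : (fun ω => Set.indicator B (fun _ => c) (Z (n + 1) ω))
        = Set.indicator (Z (n + 1) ⁻¹' B) (fun _ => c) := by
      ext ω
      by_cases h : Z (n + 1) ω ∈ B <;> simp [Set.indicator_apply, Set.mem_preimage, h]
    calc ∫⁻ ω in s, Set.indicator B (fun _ => c) (Z (n + 1) ω) ∂μ
        = ∫⁻ ω in s, Set.indicator (Z (n + 1) ⁻¹' B) (fun _ => c) ω ∂μ := by rw [hl]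
      _ = c * (μ.restrict s) (Z (n + 1) ⁻¹' B) := by
          rw [lintegral_indicator hpre, setLIntegral_const]
      _ = c * μ (s ∩ Z (n + 1) ⁻¹' B) := by
          rw [Measure.restrict_apply hpre, Set.inter_comm]
      _ = c * ∫⁻ ω in s, Q (Z n ω) B ∂μ := by rw [masterA Q μ Z hZ hCE n hs hB]
      _ = ∫⁻ ω in s, c * Q (Z n ω) B ∂μ := by
          have hQZ : Measurable fun ω => Q (Z n ω) B := (Q.measurable_coe hB).comp (hZ n)
          rw [lintegral_const_mul c hQZ]
      _ = ∫⁻ ω in s, ∫⁻ y, Set.indicator B (fun _ => c) y ∂(Q (Z n ω)) ∂μ := by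
          refine lintegral_congr fun ω => ?_
          rw [lintegral_indicator hB, setLIntegral_const]
  · intro f g hdisj hf hg ihf ihg
    have hfc : Measurable fun ω => f (Z (n + 1) ω) := hf.comp (hZ (n + 1))
    have hKf : Measurable fun ω => ∫⁻ y, f y ∂(Q (Z n ω)) :=
      (hf.lintegral_kernel).comp (hZ n)
    calc ∫⁻ ω in s, (f + g) (Z (n + 1) ω) ∂μ
        = ∫⁻ ω in s, (f (Z (n + 1) ω) + g (Z (n + 1) ω)) ∂μ := rfl
      _ = ∫⁻ ω in s, f (Z (n + 1) ω) ∂μ + ∫⁻ ω in s, g (Z (n + 1) ω) ∂μ :=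
          lintegral_add_left hfc _
      _ = ∫⁻ ω in s, ∫⁻ y, f y ∂(Q (Z n ω)) ∂μ + ∫⁻ ω in s, ∫⁻ y, g y ∂(Q (Z n ω)) ∂μ := by
          rw [ihf, ihg]
      _ = ∫⁻ ω in s, (∫⁻ y, f y ∂(Q (Z n ω)) + ∫⁻ y, g y ∂(Q (Z n ω))) ∂μ :=
          (lintegral_add_left hKf _).symm
      _ = ∫⁻ ω in s, ∫⁻ y, (f + g) y ∂(Q (Z n ω)) ∂μ := by
          refine lintegral_congr fun ω => ?_
          rw [← lintegral_add_left hf]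
          rfl
  · intro f hfm hmono ihf
    calc ∫⁻ ω in s, ⨆ k, f k (Z (n + 1) ω) ∂μ
        = ⨆ k, ∫⁻ ω in s, f k (Z (n + 1) ω) ∂μ :=
          lintegral_iSup (fun k => (hfm k).comp (hZ (n + 1)))
            (fun i j hij ω => hmono hij (Z (n + 1) ω))
      _ = ⨆ k, ∫⁻ ω in s, ∫⁻ y, f k y ∂(Q (Z n ω)) ∂μ := iSup_congr fun k => ihf k
      _ = ∫⁻ ω in s, ⨆ k, ∫⁻ y, f k y ∂(Q (Z n ω)) ∂μ :=
          (lintegral_iSup (fun k => ((hfm k).lintegral_kernel).comp (hZ n))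
            (fun i j hij ω => lintegral_mono fun y => hmono hij y)).symm
      _ = ∫⁻ ω in s, ∫⁻ y, ⨆ k, f k y ∂(Q (Z n ω)) ∂μ := by
          refine lintegral_congr fun ω => ?_
          rw [lintegral_iSup hfm hmono]

lemma masterC (hZ : ∀ n, Measurable (Z n)) (hCE : CEhyp Q μ Z)
    (n : ℕ) {Y : Ω → ℝ≥0∞} (hY : Measurable[Fn Z n] Y) {φ : E → ℝ≥0∞} (hφ : Measurable φ) :
    ∫⁻ ω, Y ω * φ (Z (n + 1) ω) ∂μ = ∫⁻ ω, Y ω * ∫⁻ y, φ y ∂(Q (Z n ω)) ∂μ := by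
  refine Measurable.ennreal_induction (α := Ω)
    (motive := fun Y => ∫⁻ ω, Y ω * φ (Z (n + 1) ω) ∂μ = ∫⁻ ω, Y ω * ∫⁻ y, φ y ∂(Q (Z n ω)) ∂μ)
    ?_ ?_ ?_ hY
  · intro c t ht
    have hmt : MeasurableSet t := Fn_le Z hZ n t ht
    have h1 : ∀ (g : Ω → ℝ≥0∞),
        (fun ω => Set.indicator t (fun _ => c) ω * g ω)
          = fun ω => Set.indicator t (fun ω => c * g ω) ω := by
      intro g
      ext ω
      by_cases h : ω ∈ t <;> simp [Set.indicator_apply, h]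
    have h4 : Measurable fun ω => φ (Z (n + 1) ω) := hφ.comp (hZ (n + 1))
    have h5 : Measurable fun ω => ∫⁻ y, φ y ∂(Q (Z n ω)) := (hφ.lintegral_kernel).comp (hZ n)
    rw [h1, h1, lintegral_indicator hmt, lintegral_indicator hmt,
      lintegral_const_mul c h4, lintegral_const_mul c h5,
      masterB Q μ Z hZ hCE n hφ ht]
  · intro f g hdisj hf hg ihf ihg
    have hfa : Measurable f := hf.mono (Fn_le Z hZ n) le_rfl
    have hga : Measurable g := hg.mono (Fn_le Z hZ n) le_rfl
    have h2 : ∀ (g' : Ω → ℝ≥0∞), (fun ω => (f + g) ω * g' ω)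
        = fun ω => f ω * g' ω + g ω * g' ω := by
      intro g'; ext ω; simp [add_mul]
    have h4 : Measurable fun ω => φ (Z (n + 1) ω) := hφ.comp (hZ (n + 1))
    have h5 : Measurable fun ω => ∫⁻ y, φ y ∂(Q (Z n ω)) := (hφ.lintegral_kernel).comp (hZ n)
    rw [h2, h2, lintegral_add_left (f := fun ω => f ω * φ (Z (n + 1) ω)) (hfa.mul h4),
      lintegral_add_left (f := fun ω => f ω * ∫⁻ y, φ y ∂(Q (Z n ω))) (hfa.mul h5), ihf, ihg]
  · intro f hfm hmono ihf
    have hfa : ∀ k, Measurable (f k) := fun k => (hfm k).mono (Fn_le Z hZ n) le_rfl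
    have h3 : ∀ (g' : Ω → ℝ≥0∞), (fun ω => (⨆ k, f k ω) * g' ω)
        = fun ω => ⨆ k, f k ω * g' ω := by
      intro g'; ext ω; rw [ENNReal.iSup_mul]
    have h4 : Measurable fun ω => φ (Z (n + 1) ω) := hφ.comp (hZ (n + 1))
    have h5 : Measurable fun ω => ∫⁻ y, φ y ∂(Q (Z n ω)) := (hφ.lintegral_kernel).comp (hZ n)
    rw [h3, h3, lintegral_iSup (f := fun k ω => f k ω * φ (Z (n + 1) ω)) (fun k => (hfa k).mul h4)
        (fun i j hij ω => mul_le_mul_left (hmono hij ω) _),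
      lintegral_iSup (f := fun k ω => f k ω * ∫⁻ y, φ y ∂(Q (Z n ω))) (fun k => (hfa k).mul h5)
        (fun i j hij ω => mul_le_mul_left (hmono hij ω) _)]
    exact iSup_congr fun k => ihf k

end Master

section ProdW

variable (Z : ℕ → Ω → E) (A : Set E) (w : E → ℝ≥0∞)

/-- Weight factor: `w (Z m ω)` if the chain has not hit `A` at times `1, ..., m`, else `1`. -/
def wt (m : ℕ) (ω : Ω) : ℝ≥0∞ :=
  open Classical in
  if (∀ k ∈ Finset.Icc 1 m, Z k ω ∉ A) then w (Z m ω) else 1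

lemma wt_of_alive {m : ℕ} {ω : Ω} (hal : ∀ k ∈ Finset.Icc 1 m, Z k ω ∉ A) :
    wt Z A w m ω = w (Z m ω) := if_pos hal

lemma wt_of_dead {m : ℕ} {ω : Ω} (hal : ¬ ∀ k ∈ Finset.Icc 1 m, Z k ω ∉ A) :
    wt Z A w m ω = 1 := if_neg hal

lemma one_le_wt (hw1 : ∀ y, 1 ≤ w y) (m : ℕ) (ω : Ω) : 1 ≤ wt Z A w m ω := by
  rw [wt]
  split
  · exact hw1 _
  · exact le_rfl

/-- `prodW Z A w N ω = ∏_{m < min(τ_A, N)} w (Z m ω)`. -/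
def prodW (N : ℕ) (ω : Ω) : ℝ≥0∞ :=
  ∏ m ∈ Finset.range N, wt Z A w m ω

lemma prodW_succ (N : ℕ) (ω : Ω) :
    prodW Z A w (N + 1) ω = prodW Z A w N ω * wt Z A w N ω :=
  Finset.prod_range_succ _ _

lemma prodW_zero (ω : Ω) : prodW Z A w 0 ω = 1 := Finset.prod_range_zero _

lemma aset_measF (hA : MeasurableSet A) {m N : ℕ} (hm : m ≤ N) :
    MeasurableSet[Fn Z N] {ω | ∀ k ∈ Finset.Icc 1 m, Z k ω ∉ A} := by
  have : {ω | ∀ k ∈ Finset.Icc 1 m, Z k ω ∉ A}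
      = ⋂ k ∈ Finset.Icc 1 m, Z k ⁻¹' Aᶜ := by
    ext ω; simp [Set.mem_iInter, Set.mem_preimage]
  rw [this]
  exact Finset.measurableSet_biInter _ fun k hk =>
    measurable_Z_Fn Z (le_trans (Finset.mem_Icc.mp hk).2 hm) hA.compl

lemma wt_measF (hA : MeasurableSet A) (hw : Measurable w) {m N : ℕ} (hm : m ≤ N) :
    Measurable[Fn Z N] (wt Z A w m) :=
  Measurable.ite (aset_measF Z A hA hm) (hw.comp (measurable_Z_Fn Z hm)) measurable_const

lemma prodW_measF (hA : MeasurableSet A) (hw : Measurable w) (N : ℕ) :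
    Measurable[Fn Z N] (prodW Z A w N) := by
  refine Finset.measurable_prod _ fun m hm => ?_
  exact wt_measF Z A w hA hw (le_of_lt (Finset.mem_range.mp hm))

lemma prodW_meas (hZ : ∀ n, Measurable (Z n)) (hA : MeasurableSet A) (hw : Measurable w)
    (N : ℕ) : Measurable (prodW Z A w N) :=
  (prodW_measF Z A w hA hw N).mono (Fn_le Z hZ N) le_rfl

lemma prodW_mono (hw1 : ∀ y, 1 ≤ w y) (ω : Ω) :
    Monotone fun N => prodW Z A w N ω := by
  intro i j hij
  exact Finset.prod_le_prod_of_subset_of_one_le' (Finset.range_subset_range.mpr hij)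
    (fun m _ _ => one_le_wt Z A w hw1 m ω)

lemma prodW_mul (w₁ w₂ : E → ℝ≥0∞) (N : ℕ) (ω : Ω) :
    prodW Z A (fun y => w₁ y * w₂ y) N ω = prodW Z A w₁ N ω * prodW Z A w₂ N ω := by
  rw [prodW, prodW, prodW, ← Finset.prod_mul_distrib]
  refine Finset.prod_congr rfl fun m _ => ?_
  rw [wt, wt, wt]
  split
  · rfl
  · rw [mul_one]

end ProdW

lemma super (Q : Kernel E E) (μ : Measure Ω) (Z : ℕ → Ω → E)
    [IsMarkovKernel Q] [IsProbabilityMeasure μ]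
    (hZ : ∀ n, Measurable (Z n)) (hCE : CEhyp Q μ Z)
    (A : Set E) (hA : MeasurableSet A)
    (w h : E → ℝ≥0∞) (hw : Measurable w) (hh : Measurable h) (hh1 : ∀ y, 1 ≤ h y)
    (hsup : ∀ y, w y * (Q y A + ∫⁻ z in Aᶜ, h z ∂(Q y)) ≤ h y)
    (x : E) (hZ0 : ∀ ω, Z 0 ω = x) (N : ℕ) :
    ∫⁻ ω, prodW Z A w N ω ∂μ ≤ h x := by
  set D : ℕ → Ω → ℝ≥0∞ :=
    fun n ω => prodW Z A w n ω * wt Z A h n ω with hD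
  -- base case
  have base : ∫⁻ ω, D 0 ω ∂μ = h x := by
    have heq : ∀ ω, D 0 ω = h x := by
      intro ω
      have h0 : ∀ k ∈ Finset.Icc 1 0, Z k ω ∉ A := by
        intro k hk
        rw [Finset.mem_Icc] at hk
        omega
      rw [hD]
      simp only
      rw [prodW_zero, one_mul, wt_of_alive Z A h h0, hZ0 ω]
    rw [lintegral_congr heq, lintegral_const, measure_univ, mul_one]
  -- inductive step
  have step : ∀ n, ∫⁻ ω, D (n + 1) ω ∂μ ≤ ∫⁻ ω, D n ω ∂μ := by
    intro n
    set φ : E → ℝ≥0∞ := fun y => open Classical in if y ∈ A then 1 else h y with hφdef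
    have hφ : Measurable φ := Measurable.ite hA measurable_const hh
    have hφA : ∀ y, y ∈ A → φ y = 1 := by
      intro y hy; rw [hφdef]; exact if_pos hy
    have hφnA : ∀ y, y ∉ A → φ y = h y := by
      intro y hy; rw [hφdef]; exact if_neg hy
    have hsplit : ∀ z : E, ∫⁻ y, φ y ∂(Q z) = Q z A + ∫⁻ y in Aᶜ, h y ∂(Q z) := by
      intro z
      rw [← lintegral_add_compl φ hA]
      congr 1
      · rw [setLIntegral_congr_fun hA (fun y hy => if_pos hy), setLIntegral_one]
      · exact setLIntegral_congr_fun hA.compl (fun y hy => if_neg hy)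
    set aset : Set Ω := {ω | ∀ k ∈ Finset.Icc 1 n, Z k ω ∉ A} with haset
    have haset_m : MeasurableSet[Fn Z n] aset := aset_measF Z A hA le_rfl
    set Y : Ω → ℝ≥0∞ := aset.indicator (fun ω => prodW Z A w n ω * w (Z n ω)) with hY
    have hYm : Measurable[Fn Z n] Y :=
      (((prodW_measF Z A w hA hw n).mul
        (hw.comp (measurable_Z_Fn Z le_rfl)))).indicator haset_m
    have hYamb : Measurable Y := hYm.mono (Fn_le Z hZ n) le_rfl
    have haliveSucc : ∀ ω, (∀ k ∈ Finset.Icc 1 (n + 1), Z k ω ∉ A)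
        ↔ ((∀ k ∈ Finset.Icc 1 n, Z k ω ∉ A) ∧ Z (n + 1) ω ∉ A) := by
      intro ω
      constructor
      · intro hal
        refine ⟨fun k hk => hal k ?_, hal (n + 1) ?_⟩
        · rw [Finset.mem_Icc] at hk ⊢; omega
        · rw [Finset.mem_Icc]; omega
      · rintro ⟨h1, h2⟩ k hk
        rw [Finset.mem_Icc] at hk
        rcases Nat.lt_or_ge k (n + 1) with hlt | hge
        · exact h1 k (Finset.mem_Icc.mpr ⟨hk.1, by omega⟩)
        · have hkn : k = n + 1 := by omega
          rw [hkn]; exact h2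
    have hD1 : ∀ ω, D (n + 1) ω = Y ω * φ (Z (n + 1) ω) + (asetᶜ).indicator (prodW Z A w n) ω := by
      intro ω
      by_cases hal : ∀ k ∈ Finset.Icc 1 n, Z k ω ∉ A
      · have hmem : ω ∈ aset := hal
        have hnmem : ω ∉ asetᶜ := fun hc => hc hmem
        rw [hD]
        simp only
        rw [prodW_succ, wt_of_alive Z A w hal, hY, Set.indicator_of_mem hmem,
          Set.indicator_of_notMem hnmem, add_zero]
        by_cases hA' : Z (n + 1) ω ∈ A
        · have hd : ¬ ∀ k ∈ Finset.Icc 1 (n + 1), Z k ω ∉ A := by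
            rw [haliveSucc]; tauto
          rw [wt_of_dead Z A h hd, hφA _ hA', mul_one]
        · have hl : ∀ k ∈ Finset.Icc 1 (n + 1), Z k ω ∉ A := (haliveSucc ω).mpr ⟨hal, hA'⟩
          rw [wt_of_alive Z A h hl, hφnA _ hA', mul_assoc]
      · have hmem : ω ∈ asetᶜ := hal
        have hd : ¬ ∀ k ∈ Finset.Icc 1 (n + 1), Z k ω ∉ A := by
          rw [haliveSucc]; tauto
        rw [hD]
        simp only
        rw [prodW_succ, wt_of_dead Z A w hal, wt_of_dead Z A h hd, hY,
          Set.indicator_of_notMem (show ω ∉ aset from hal), Set.indicator_of_mem hmem,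
          zero_mul, zero_add, mul_one, mul_one]
    have hD2 : ∀ ω, Y ω * (∫⁻ y, φ y ∂(Q (Z n ω))) + (asetᶜ).indicator (prodW Z A w n) ω
        ≤ D n ω := by
      intro ω
      by_cases hal : ∀ k ∈ Finset.Icc 1 n, Z k ω ∉ A
      · have hmem : ω ∈ aset := hal
        have hnmem : ω ∉ asetᶜ := fun hc => hc hmem
        rw [hY, Set.indicator_of_mem hmem, Set.indicator_of_notMem hnmem, add_zero, hD]
        simp only
        rw [wt_of_alive Z A h hal, hsplit, mul_assoc]
        exact mul_le_mul_right (hsup (Z n ω)) _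
      · have hmem : ω ∈ asetᶜ := hal
        rw [hY, Set.indicator_of_notMem (show ω ∉ aset from hal), Set.indicator_of_mem hmem,
          zero_mul, zero_add, hD]
        simp only
        rw [wt_of_dead Z A h hal, mul_one]
    have hmeas1 : Measurable fun ω => Y ω * φ (Z (n + 1) ω) :=
      hYamb.mul (hφ.comp (hZ (n + 1)))
    calc ∫⁻ ω, D (n + 1) ω ∂μ
        = ∫⁻ ω, (Y ω * φ (Z (n + 1) ω) + (asetᶜ).indicator (prodW Z A w n) ω) ∂μ :=
          lintegral_congr hD1
      _ = ∫⁻ ω, Y ω * φ (Z (n + 1) ω) ∂μ + ∫⁻ ω, (asetᶜ).indicator (prodW Z A w n) ω ∂μ :=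
          lintegral_add_left hmeas1 _
      _ = ∫⁻ ω, Y ω * (∫⁻ y, φ y ∂(Q (Z n ω))) ∂μ
            + ∫⁻ ω, (asetᶜ).indicator (prodW Z A w n) ω ∂μ := by
          rw [masterC Q μ Z hZ hCE n hYm hφ]
      _ = ∫⁻ ω, (Y ω * (∫⁻ y, φ y ∂(Q (Z n ω))) + (asetᶜ).indicator (prodW Z A w n) ω) ∂μ := by
          have hmeas2 : Measurable fun ω => Y ω * ∫⁻ y, φ y ∂(Q (Z n ω)) :=
            hYamb.mul ((hφ.lintegral_kernel).comp (hZ n))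
          rw [lintegral_add_left hmeas2]
      _ ≤ ∫⁻ ω, D n ω ∂μ := lintegral_mono hD2
  have main : ∀ n, ∫⁻ ω, D n ω ∂μ ≤ h x := by
    intro n
    induction n with
    | zero => exact le_of_eq base
    | succ n ih => exact (step n).trans ih
  refine le_trans (lintegral_mono fun ω => ?_) (main N)
  rw [hD]
  simp only
  exact le_mul_of_one_le_right' (one_le_wt Z A h hh1 N ω)

/-- Tangent-line (weighted AM-GM) substitute for Jensen's inequality:
`∫ V^α dQx ≤ (∫ V dQx)^α ≤ (λ V x + K)^α` for `0 < α ≤ 1`. -/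
lemma jensen_drift {E : Type*} [MeasurableSpace E] (Q : Kernel E E) [IsMarkovKernel Q]
    (V : E → ℝ) (hVmeas : Measurable V) (hV1 : ∀ y, 1 ≤ V y)
    (hVint : ∀ x, Integrable V (Q x))
    (lam K : ℝ) (hlam0 : 0 < lam) (hK : 0 < K)
    (hdrift : ∀ x, ∫ y, V y ∂(Q x) ≤ lam * V x + K)
    (α : ℝ) (hα0 : 0 < α) (hα1 : α ≤ 1) (x : E) :
    ∫⁻ y, ENNReal.ofReal (V y ^ α) ∂(Q x) ≤ ENNReal.ofReal ((lam * V x + K) ^ α) := by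
  set s0 := lam * V x + K with hs0def
  have hs00 : 0 < s0 := by
    have h0 : 0 < lam * V x := mul_pos hlam0 (lt_of_lt_of_le one_pos (hV1 x))
    rw [hs0def]; linarith
  have hs0α : 0 < s0 ^ α := Real.rpow_pos_of_pos hs00 α
  have hc1 : 0 ≤ α * (s0 ^ α / s0) := by positivity
  have hc2 : 0 ≤ (1 - α) * s0 ^ α := mul_nonneg (by linarith) hs0α.le
  have hpt : ∀ y, V y ^ α ≤ (α * (s0 ^ α / s0)) * V y + (1 - α) * s0 ^ α := by
    intro y
    have hVy0 : 0 ≤ V y := le_trans zero_le_one (hV1 y)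
    have h1 := Real.geom_mean_le_arith_mean2_weighted hα0.le (by linarith : (0:ℝ) ≤ 1 - α)
      (div_nonneg hVy0 hs00.le) zero_le_one (by ring)
    rw [Real.one_rpow, mul_one, mul_one] at h1
    have h2 : (V y / s0) ^ α * s0 ^ α ≤ (α * (V y / s0) + (1 - α)) * s0 ^ α :=
      mul_le_mul_of_nonneg_right h1 hs0α.le
    have h3 : (V y / s0) ^ α * s0 ^ α = V y ^ α := by
      rw [← Real.mul_rpow (div_nonneg hVy0 hs00.le) hs00.le, div_mul_cancel₀]
      exact ne_of_gt hs00
    rw [h3] at h2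
    calc V y ^ α ≤ (α * (V y / s0) + (1 - α)) * s0 ^ α := h2
      _ = (α * (s0 ^ α / s0)) * V y + (1 - α) * s0 ^ α := by ring
  calc ∫⁻ y, ENNReal.ofReal (V y ^ α) ∂(Q x)
      ≤ ∫⁻ y, ENNReal.ofReal ((α * (s0 ^ α / s0)) * V y + (1 - α) * s0 ^ α) ∂(Q x) :=
        lintegral_mono fun y => ENNReal.ofReal_le_ofReal (hpt y)
    _ = ∫⁻ y, (ENNReal.ofReal (α * (s0 ^ α / s0)) * ENNReal.ofReal (V y)
          + ENNReal.ofReal ((1 - α) * s0 ^ α)) ∂(Q x) := by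
        refine lintegral_congr fun y => ?_
        have hVy0 : 0 ≤ V y := le_trans zero_le_one (hV1 y)
        rw [ENNReal.ofReal_add (mul_nonneg hc1 hVy0) hc2, ENNReal.ofReal_mul hc1]
    _ = ENNReal.ofReal (α * (s0 ^ α / s0)) * ∫⁻ y, ENNReal.ofReal (V y) ∂(Q x)
          + ENNReal.ofReal ((1 - α) * s0 ^ α) := by
        rw [lintegral_add_right _ measurable_const, lintegral_const, measure_univ, mul_one,
          lintegral_const_mul _ hVmeas.ennreal_ofReal]
    _ ≤ ENNReal.ofReal (α * (s0 ^ α / s0)) * ENNReal.ofReal s0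
          + ENNReal.ofReal ((1 - α) * s0 ^ α) := by
        gcongr
        rw [← ofReal_integral_eq_lintegral_ofReal (hVint x)
          (ae_of_all _ fun y => le_trans zero_le_one (hV1 y))]
        exact ENNReal.ofReal_le_ofReal (hdrift x)
    _ = ENNReal.ofReal ((α * (s0 ^ α / s0)) * s0 + (1 - α) * s0 ^ α) := by
        rw [ENNReal.ofReal_add (mul_nonneg hc1 hs00.le) hc2, ENNReal.ofReal_mul hc1]
    _ = ENNReal.ofReal (s0 ^ α) := by
        congr 1
        field_simp
        ring

end Stmt9Aux

open Stmt9Aux in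
set_option maxHeartbeats 2000000 in
theorem stmt_9 {E : Type*} [MeasurableSpace E]
    (lam K M r ε l : ℝ)
    (hlam : lam ∈ Set.Ioo (0 : ℝ) 1) (hK : 0 < K)
    (hM : max (K / (1 - lam)) 1 < M) (hr : r = (lam + K / M)⁻¹)
    (hε : 0 < ε)
    (hl1 : 1 < l)
    (hl2 : l < r ^ ((|Real.log (1 - ε)| ⊓ Real.log M) / (2 * Real.log M))) :
    ∃ C : ℝ, 0 < C ∧
      ∀ (Q : Kernel E E), IsMarkovKernel Q →
      ∀ (V : E → ℝ), Measurable V → (∀ x, 1 ≤ V x) → (∀ x, Integrable V (Q x)) →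
      (∀ x, ∫ y, V y ∂(Q x) ≤ lam * V x + K) →
      ∀ (A : Set E), MeasurableSet A →
      (∀ x, V x ≤ M → ε ≤ (Q x A).toReal) →
      ∀ (Ω : Type) (_ : MeasurableSpace Ω) (μ : Measure Ω), IsProbabilityMeasure μ →
      ∀ (Z : ℕ → Ω → E), (∀ n, Measurable (Z n)) →
      (∀ (n : ℕ) (B : Set E), MeasurableSet B →
        (μ[fun ω => Set.indicator B (fun _ => (1 : ℝ)) (Z (n + 1) ω) |
            MeasurableSpace.comap (fun ω (i : Fin (n + 1)) => Z i ω) inferInstance])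
          =ᵐ[μ] fun ω => (Q (Z n ω) B).toReal) →
      ∀ x : E, (∀ ω, Z 0 ω = x) →
      -- `E_x[l ^ τ_A] ≤ C ⬝ V(x)` where `τ_A = inf {n ≥ 1 : Z n ∈ A}`; the supremum below
      -- equals `l ^ τ_A` (with value `∞` if the chain never hits `A`, since `l > 1`)
      ∫⁻ ω, ⨆ n : ℕ,
          (if (n : ℕ∞) ≤ ⨅ (m : ℕ) (_ : 1 ≤ m ∧ Z m ω ∈ A), (m : ℕ∞)
            then ENNReal.ofReal l ^ n else 0) ∂μ
        ≤ ENNReal.ofReal (C * V x) := by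
  obtain ⟨hlam0, hlam1⟩ := hlam
  have hM1 : 1 < M := lt_of_le_of_lt (le_max_right _ _) hM
  have hMK : K / (1 - lam) < M := lt_of_le_of_lt (le_max_left _ _) hM
  have h1lam : 0 < 1 - lam := by linarith
  have hM0 : 0 < M := by linarith
  have hKM : K < M * (1 - lam) := (div_lt_iff₀ h1lam).mp hMK
  have hl0 : 0 < l := lt_trans one_pos hl1
  set q := lam + K / M with hqdef
  have hq0 : 0 < q := add_pos hlam0 (div_pos hK hM0)
  have hq1 : q < 1 := by
    have h2 : K / M < 1 - lam := (div_lt_iff₀ hM0).mpr (by linarith)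
    rw [hqdef]; linarith
  have hqM : q * M = lam * M + K := by
    rw [hqdef]; field_simp
  rcases lt_trichotomy ε 1 with hε1 | hε1 | hε1
  rotate_left
  -- case ε = 1 : contradiction with hl2
  · exfalso
    have hmin0 : |Real.log (1 - ε)| ⊓ Real.log M = 0 := by
      rw [hε1]
      simp [Real.log_nonneg hM1.le]
    rw [hmin0, zero_div, Real.rpow_zero] at hl2
    linarith
  -- case ε > 1 : the minorization hypothesis is contradictory
  · refine ⟨1, one_pos, ?_⟩
    intro Q hQmk V hVmeas hV1 hVint hdrift A hA hminor Ω mΩ μ hμ Z hZ hCE x hZ0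
    exfalso
    haveI := hQmk
    haveI : Nonempty E := ⟨x⟩
    have hbdd : BddBelow (Set.range V) := ⟨1, fun v ⟨y, hy⟩ => hy ▸ hV1 y⟩
    have hι1 : ∀ y, (⨅ z, V z) ≤ V y := fun y => ciInf_le hbdd y
    have hexists : ∃ y, V y < M := by
      by_contra hcon
      push_neg at hcon
      have hιM : M ≤ ⨅ z, V z := le_ciInf hcon
      have hη : 0 < (1 - lam) * M - K := by
        have e : (1 - lam) * M = M * (1 - lam) := mul_comm _ _
        linarith
      obtain ⟨y, hy⟩ := exists_lt_of_ciInf_lt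
        (show (⨅ z, V z) < (⨅ z, V z) + ((1 - lam) * M - K) by linarith)
      have h5 : (⨅ z, V z) ≤ ∫ z, V z ∂(Q y) := by
        have h5' := integral_mono (μ := Q y) (integrable_const (⨅ z, V z)) (hVint y)
          (fun z => hι1 z)
        simpa using h5'
      have h6 := hdrift y
      have h7 : lam * V y ≤ lam * ((⨅ z, V z) + ((1 - lam) * M - K)) :=
        mul_le_mul_of_nonneg_left hy.le hlam0.le
      have h8 : (1 - lam) * M ≤ (1 - lam) * (⨅ z, V z) :=
        mul_le_mul_of_nonneg_left hιM h1lam.le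
      have h9 : (⨅ z, V z) ≤ lam * (⨅ z, V z) + lam * ((1 - lam) * M - K) + K := by
        have e : lam * ((⨅ z, V z) + ((1 - lam) * M - K))
            = lam * (⨅ z, V z) + lam * ((1 - lam) * M - K) := by ring
        linarith
      have h10 : (1 - lam) * M - K ≤ lam * ((1 - lam) * M - K) := by
        have e2 : (1 - lam) * (⨅ z, V z) = (⨅ z, V z) - lam * (⨅ z, V z) := by ring
        linarith
      have h11 : lam * ((1 - lam) * M - K) < 1 * ((1 - lam) * M - K) :=
        mul_lt_mul_of_pos_right hlam1 hη
      rw [one_mul] at h11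
      linarith
    obtain ⟨y, hy⟩ := hexists
    have h9 := hminor y hy.le
    have hle1 : (Q y A).toReal ≤ 1 := by
      have h10 : Q y A ≤ 1 := prob_le_one
      calc (Q y A).toReal ≤ (1 : ℝ≥0∞).toReal := ENNReal.toReal_mono ENNReal.one_ne_top h10
        _ = 1 := ENNReal.toReal_one
    linarith
  -- main case ε < 1
  have hlogM : 0 < Real.log M := Real.log_pos hM1
  have h1ε0 : 0 < 1 - ε := by linarith
  have hlog1ε : Real.log (1 - ε) < 0 := Real.log_neg h1ε0 (by linarith)
  set mn := min (-Real.log (1 - ε)) (Real.log M) with hmndef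
  have hmn0 : 0 < mn := lt_min (by linarith) hlogM
  set α := mn / Real.log M with hαdef
  have hα0 : 0 < α := div_pos hmn0 hlogM
  have hα1 : α ≤ 1 := (div_le_one hlogM).mpr (min_le_right _ _)
  have hexp_eq : (|Real.log (1 - ε)| ⊓ Real.log M) / (2 * Real.log M) = α / 2 := by
    rw [abs_of_nonpos hlog1ε.le, hαdef, div_div, mul_comm]
  have hl2' : l < r ^ (α / 2) := by rw [← hexp_eq]; exact hl2
  have hr1 : 1 < r := by rw [hr]; exact one_lt_inv_iff₀.mpr ⟨hq0, hq1⟩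
  have hr0 : 0 < r := lt_trans one_pos hr1
  have hl2sq : l ^ 2 < r ^ α := by
    have hsq : (r ^ (α / 2)) ^ 2 = r ^ α := by
      rw [← Real.rpow_natCast (r ^ (α / 2)) 2, ← Real.rpow_mul hr0.le]
      norm_num
    calc l ^ 2 < (r ^ (α / 2)) ^ 2 := by
          apply pow_lt_pow_left₀ hl2' hl0.le (by norm_num)
      _ = r ^ α := hsq
  have hqα0 : 0 < q ^ α := Real.rpow_pos_of_pos hq0 _
  set ρ := l ^ 2 * q ^ α with hρdef
  have hρ0 : 0 < ρ := mul_pos (by positivity) hqα0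
  have hρ1 : ρ < 1 := by
    have hrains : r ^ α = (q ^ α)⁻¹ := by rw [hr, Real.inv_rpow hq0.le]
    have h := hl2sq
    rw [hrains, inv_eq_one_div] at h
    rw [hρdef]
    exact (lt_div_iff₀ hqα0).mp h
  set Mα := M ^ α with hMαdef
  have hMα_exp : Mα = Real.exp mn := by
    rw [hMαdef, Real.rpow_def_of_pos hM0, hαdef]
    congr 1
    field_simp
  have hMα1 : 1 ≤ Mα := by
    rw [hMα_exp]
    calc (1 : ℝ) = Real.exp 0 := Real.exp_zero.symm
      _ ≤ Real.exp mn := Real.exp_le_exp.mpr hmn0.le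
  have hMαbound : Mα * (1 - ε) ≤ 1 := by
    have h2 : Real.exp mn ≤ (1 - ε)⁻¹ := by
      calc Real.exp mn ≤ Real.exp (-Real.log (1 - ε)) := Real.exp_le_exp.mpr (min_le_left _ _)
        _ = (1 - ε)⁻¹ := by rw [Real.exp_neg, Real.exp_log h1ε0]
    rw [hMα_exp]
    calc Real.exp mn * (1 - ε) ≤ (1 - ε)⁻¹ * (1 - ε) :=
          mul_le_mul_of_nonneg_right h2 h1ε0.le
      _ = 1 := inv_mul_cancel₀ (ne_of_gt h1ε0)
  have hMα0 : 0 < Mα := lt_of_lt_of_le one_pos hMα1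
  have hρMα0 : 0 < ρ * Mα := mul_pos hρ0 hMα0
  have hfeas : 1 - ε < (ρ * Mα)⁻¹ := by
    have h3 : (1 - ε) * (ρ * Mα) < 1 := by
      calc (1 - ε) * (ρ * Mα) = ρ * (Mα * (1 - ε)) := by ring
        _ ≤ ρ * 1 := mul_le_mul_of_nonneg_left hMαbound hρ0.le
        _ = ρ := mul_one ρ
        _ < 1 := hρ1
    rw [← one_div]
    exact (lt_div_iff₀ hρMα0).mpr h3
  set γ := ((1 - ε) + (ρ * Mα)⁻¹) / 2 with hγdef
  have hγ1 : 1 - ε < γ := by rw [hγdef]; linarith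
  have hγ2 : γ < (ρ * Mα)⁻¹ := by rw [hγdef]; linarith
  have hγ0 : 0 < γ := by linarith
  have hkey_on : l ^ 2 * γ * (q * M) ^ α ≤ 1 := by
    rw [Real.mul_rpow hq0.le hM0.le]
    have heq : l ^ 2 * γ * (q ^ α * M ^ α) = γ * (ρ * Mα) := by
      rw [hρdef, hMαdef]; ring
    rw [heq]
    have h4 : γ * (ρ * Mα) < 1 := by
      have := hγ2
      rw [← one_div] at this
      exact (lt_div_iff₀ hρMα0).mp this
    exact h4.le
  have hβε : γ⁻¹ * (1 - ε) < 1 := by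
    rw [inv_mul_eq_div]
    exact (div_lt_one hγ0).mpr hγ1
  have hden : 0 < 1 - γ⁻¹ * (1 - ε) := by linarith
  set c₂ := max 1 (γ⁻¹ * ε / (1 - γ⁻¹ * (1 - ε))) with hc₂def
  have hc₂1 : (1 : ℝ) ≤ c₂ := le_max_left _ _
  have hc₂0 : 0 < c₂ := lt_of_lt_of_le one_pos hc₂1
  have hc₂key : γ⁻¹ * (c₂ - (c₂ - 1) * ε) ≤ c₂ := by
    have h6 : γ⁻¹ * ε / (1 - γ⁻¹ * (1 - ε)) ≤ c₂ := le_max_right _ _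
    have h5 : γ⁻¹ * ε ≤ c₂ * (1 - γ⁻¹ * (1 - ε)) := (div_le_iff₀ hden).mp h6
    have key : γ⁻¹ * (c₂ - (c₂ - 1) * ε) = γ⁻¹ * ε + c₂ * (γ⁻¹ * (1 - ε)) := by ring
    have e3 : c₂ * (1 - γ⁻¹ * (1 - ε)) = c₂ - c₂ * (γ⁻¹ * (1 - ε)) := by ring
    rw [key]
    linarith
  refine ⟨Real.sqrt c₂, Real.sqrt_pos.mpr hc₂0, ?_⟩
  intro Q hQmk V hVmeas hV1 hVint hdrift A hA hminor Ω mΩ μ hμ Z hZ hCE x hZ0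
  haveI := hQmk
  haveI := hμ
  have hCE' : CEhyp Q μ Z := hCE
  -- the weight functions and supersolutions
  set w₁ : E → ℝ≥0∞ := fun y =>
    ENNReal.ofReal (open Classical in if V y ≤ M then l ^ 2 * γ else l ^ 2) with hw₁def
  set w₂ : E → ℝ≥0∞ := fun y =>
    ENNReal.ofReal (open Classical in if V y ≤ M then γ⁻¹ else 1) with hw₂def
  set w₀ : E → ℝ≥0∞ := fun _ => ENNReal.ofReal l with hw₀def
  set h₁ : E → ℝ≥0∞ := fun y => ENNReal.ofReal (V y ^ α) with hh₁def
  set h₂ : E → ℝ≥0∞ := fun _ => ENNReal.ofReal c₂ with hh₂def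
  have hsetVM : MeasurableSet {y | V y ≤ M} := measurableSet_le hVmeas measurable_const
  have hw₁m : Measurable w₁ :=
    (Measurable.ite hsetVM measurable_const measurable_const).ennreal_ofReal
  have hw₂m : Measurable w₂ :=
    (Measurable.ite hsetVM measurable_const measurable_const).ennreal_ofReal
  have hh₁m : Measurable h₁ := (hVmeas.pow measurable_const).ennreal_ofReal
  have hh₂m : Measurable h₂ := measurable_const
  have hVy0 : ∀ y, (0:ℝ) ≤ V y := fun y => le_trans zero_le_one (hV1 y)
  have hVα1 : ∀ y, (1:ℝ) ≤ V y ^ α := by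
    intro y
    calc (1:ℝ) = 1 ^ α := (Real.one_rpow α).symm
      _ ≤ V y ^ α := Real.rpow_le_rpow zero_le_one (hV1 y) hα0.le
  have hh₁1 : ∀ y, 1 ≤ h₁ y := fun y => ENNReal.one_le_ofReal.mpr (hVα1 y)
  have hh₂1 : ∀ y, 1 ≤ h₂ y := fun y => ENNReal.one_le_ofReal.mpr hc₂1
  -- supersolution property for (w₁, h₁)
  have hsup1 : ∀ y, w₁ y * (Q y A + ∫⁻ z in Aᶜ, h₁ z ∂(Q y)) ≤ h₁ y := by
    intro y
    have hib : Q y A + ∫⁻ z in Aᶜ, h₁ z ∂(Q y)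
        ≤ ENNReal.ofReal ((lam * V y + K) ^ α) := by
      have h1A : Q y A ≤ ∫⁻ z in A, h₁ z ∂(Q y) := by
        calc Q y A = ∫⁻ _ in A, 1 ∂(Q y) := (setLIntegral_one A).symm
          _ ≤ ∫⁻ z in A, h₁ z ∂(Q y) := lintegral_mono fun z => hh₁1 z
      calc Q y A + ∫⁻ z in Aᶜ, h₁ z ∂(Q y)
          ≤ ∫⁻ z in A, h₁ z ∂(Q y) + ∫⁻ z in Aᶜ, h₁ z ∂(Q y) := add_le_add_left h1A _
        _ = ∫⁻ z, h₁ z ∂(Q y) := lintegral_add_compl _ hA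
        _ ≤ ENNReal.ofReal ((lam * V y + K) ^ α) :=
            jensen_drift Q V hVmeas hV1 hVint lam K hlam0 hK hdrift α hα0 hα1 y
    have hs0y : (0:ℝ) < lam * V y + K := by
      have h0 : 0 < lam * V y := mul_pos hlam0 (lt_of_lt_of_le one_pos (hV1 y))
      linarith
    by_cases hyC : V y ≤ M
    · have hw : w₁ y = ENNReal.ofReal (l ^ 2 * γ) := by
        rw [hw₁def]
        simp only
        rw [if_pos hyC]
      have hreal : l ^ 2 * γ * (lam * V y + K) ^ α ≤ 1 := by
        have h7 : lam * V y + K ≤ q * M := by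
          rw [hqM]
          have := mul_le_mul_of_nonneg_left hyC hlam0.le
          linarith
        have h8 : (lam * V y + K) ^ α ≤ (q * M) ^ α :=
          Real.rpow_le_rpow hs0y.le h7 hα0.le
        calc l ^ 2 * γ * (lam * V y + K) ^ α ≤ l ^ 2 * γ * (q * M) ^ α := by
              apply mul_le_mul_of_nonneg_left h8
              positivity
          _ ≤ 1 := hkey_on
      calc w₁ y * (Q y A + ∫⁻ z in Aᶜ, h₁ z ∂(Q y))
          ≤ ENNReal.ofReal (l ^ 2 * γ) * ENNReal.ofReal ((lam * V y + K) ^ α) := by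
            rw [hw]; exact mul_le_mul_right hib _
        _ = ENNReal.ofReal (l ^ 2 * γ * (lam * V y + K) ^ α) :=
            (ENNReal.ofReal_mul (by positivity)).symm
        _ ≤ ENNReal.ofReal 1 := ENNReal.ofReal_le_ofReal hreal
        _ ≤ h₁ y := by rw [ENNReal.ofReal_one]; exact hh₁1 y
    · have hw : w₁ y = ENNReal.ofReal (l ^ 2) := by
        rw [hw₁def]
        simp only
        rw [if_neg hyC]
      push_neg at hyC
      have hreal : l ^ 2 * (lam * V y + K) ^ α ≤ V y ^ α := by
        have h7 : lam * V y + K ≤ q * V y := by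
          have h7' : K ≤ K / M * V y := by
            rw [div_mul_eq_mul_div, le_div_iff₀ hM0]
            have := mul_le_mul_of_nonneg_left hyC.le hK.le
            linarith
          have e4 : (lam + K / M) * V y = lam * V y + K / M * V y := by ring
          rw [hqdef]
          linarith
        have h8 : (lam * V y + K) ^ α ≤ (q * V y) ^ α :=
          Real.rpow_le_rpow hs0y.le h7 hα0.le
        have h9 : (q * V y) ^ α = q ^ α * V y ^ α := Real.mul_rpow hq0.le (hVy0 y)
        calc l ^ 2 * (lam * V y + K) ^ α ≤ l ^ 2 * (q ^ α * V y ^ α) := by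
              rw [← h9]
              apply mul_le_mul_of_nonneg_left h8
              positivity
          _ = ρ * V y ^ α := by rw [hρdef]; ring
          _ ≤ 1 * V y ^ α := by
              apply mul_le_mul_of_nonneg_right hρ1.le
              exact Real.rpow_nonneg (hVy0 y) α
          _ = V y ^ α := one_mul _
      calc w₁ y * (Q y A + ∫⁻ z in Aᶜ, h₁ z ∂(Q y))
          ≤ ENNReal.ofReal (l ^ 2) * ENNReal.ofReal ((lam * V y + K) ^ α) := by
            rw [hw]; exact mul_le_mul_right hib _
        _ = ENNReal.ofReal (l ^ 2 * (lam * V y + K) ^ α) :=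
            (ENNReal.ofReal_mul (by positivity)).symm
        _ ≤ h₁ y := ENNReal.ofReal_le_ofReal hreal
  -- supersolution property for (w₂, h₂)
  have hsup2 : ∀ y, w₂ y * (Q y A + ∫⁻ z in Aᶜ, h₂ z ∂(Q y)) ≤ h₂ y := by
    intro y
    have hAc : ∫⁻ z in Aᶜ, h₂ z ∂(Q y) = ENNReal.ofReal c₂ * Q y Aᶜ :=
      setLIntegral_const _ _
    have htQ : Q y A = ENNReal.ofReal (Q y A).toReal :=
      (ENNReal.ofReal_toReal (measure_ne_top _ _)).symm
    have ht0 : (0:ℝ) ≤ (Q y A).toReal := ENNReal.toReal_nonneg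
    have ht1 : (Q y A).toReal ≤ 1 := by
      have h10 : Q y A ≤ 1 := prob_le_one
      calc (Q y A).toReal ≤ (1 : ℝ≥0∞).toReal := ENNReal.toReal_mono ENNReal.one_ne_top h10
        _ = 1 := ENNReal.toReal_one
    have hcompl : Q y Aᶜ = ENNReal.ofReal (1 - (Q y A).toReal) := by
      rw [measure_compl hA (measure_ne_top _ _), measure_univ,
        ENNReal.ofReal_sub _ ht0, ENNReal.ofReal_one, ← htQ]
    have hinner : Q y A + ∫⁻ z in Aᶜ, h₂ z ∂(Q y)
        = ENNReal.ofReal ((Q y A).toReal + c₂ * (1 - (Q y A).toReal)) := by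
      rw [hAc, hcompl, ← ENNReal.ofReal_mul hc₂0.le,
        ENNReal.ofReal_add ht0 (mul_nonneg hc₂0.le (by linarith)), ← htQ]
    by_cases hyC : V y ≤ M
    · have hw : w₂ y = ENNReal.ofReal γ⁻¹ := by
        rw [hw₂def]
        simp only
        rw [if_pos hyC]
      have hεt : ε ≤ (Q y A).toReal := hminor y hyC
      have hreal : γ⁻¹ * ((Q y A).toReal + c₂ * (1 - (Q y A).toReal)) ≤ c₂ := by
        have e1 : (Q y A).toReal + c₂ * (1 - (Q y A).toReal) ≤ c₂ - (c₂ - 1) * ε := by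
          have e0 : 0 ≤ (c₂ - 1) * ((Q y A).toReal - ε) :=
            mul_nonneg (by linarith) (by linarith)
          have e1' : c₂ - (c₂ - 1) * ε - ((Q y A).toReal + c₂ * (1 - (Q y A).toReal))
              = (c₂ - 1) * ((Q y A).toReal - ε) := by ring
          linarith
        calc γ⁻¹ * ((Q y A).toReal + c₂ * (1 - (Q y A).toReal))
            ≤ γ⁻¹ * (c₂ - (c₂ - 1) * ε) :=
              mul_le_mul_of_nonneg_left e1 (inv_nonneg.mpr hγ0.le)
          _ ≤ c₂ := hc₂key
      rw [hw, hinner, hh₂def, ← ENNReal.ofReal_mul (inv_nonneg.mpr hγ0.le)]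
      exact ENNReal.ofReal_le_ofReal hreal
    · have hw : w₂ y = ENNReal.ofReal 1 := by
        rw [hw₂def]
        simp only
        rw [if_neg hyC]
      have hreal : (Q y A).toReal + c₂ * (1 - (Q y A).toReal) ≤ c₂ := by
        have e0 : 0 ≤ (Q y A).toReal * (c₂ - 1) := mul_nonneg ht0 (by linarith)
        have e1' : c₂ - ((Q y A).toReal + c₂ * (1 - (Q y A).toReal))
            = (Q y A).toReal * (c₂ - 1) := by ring
        linarith
      rw [hw, hinner, hh₂def, ENNReal.ofReal_one, one_mul]
      exact ENNReal.ofReal_le_ofReal hreal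
  -- apply the supermartingale bound
  have hs1 : ∀ N, ∫⁻ ω, prodW Z A w₁ N ω ∂μ ≤ ENNReal.ofReal (V x ^ α) :=
    fun N => super Q μ Z hZ hCE' A hA w₁ h₁ hw₁m hh₁m hh₁1 hsup1 x hZ0 N
  have hs2 : ∀ N, ∫⁻ ω, prodW Z A w₂ N ω ∂μ ≤ ENNReal.ofReal c₂ :=
    fun N => super Q μ Z hZ hCE' A hA w₂ h₂ hw₂m hh₂m hh₂1 hsup2 x hZ0 N
  -- pointwise product structure
  have hw12 : ∀ y, w₁ y * w₂ y = w₀ y * w₀ y := by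
    intro y
    rw [hw₁def, hw₂def, hw₀def]
    simp only
    by_cases hyC : V y ≤ M
    · rw [if_pos hyC, if_pos hyC, ← ENNReal.ofReal_mul (by positivity),
        ← ENNReal.ofReal_mul hl0.le]
      congr 1
      rw [mul_assoc, mul_inv_cancel₀ (ne_of_gt hγ0), mul_one, sq]
    · rw [if_neg hyC, if_neg hyC, ← ENNReal.ofReal_mul (by positivity),
        ← ENNReal.ofReal_mul hl0.le]
      congr 1
      rw [mul_one, sq]
  -- Cauchy–Schwarz for each horizon N
  have hfinal : ∀ N, ∫⁻ ω, prodW Z A w₀ N ω ∂μ ≤ ENNReal.ofReal (Real.sqrt c₂ * V x) := by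
    intro N
    set f : Ω → ℝ≥0∞ := fun ω => prodW Z A w₁ N ω ^ (1/2 : ℝ) with hfdef
    set g : Ω → ℝ≥0∞ := fun ω => prodW Z A w₂ N ω ^ (1/2 : ℝ) with hgdef
    have hfm : Measurable f := (prodW_meas Z A w₁ hZ hA hw₁m N).pow measurable_const
    have hgm : Measurable g := (prodW_meas Z A w₂ hZ hA hw₂m N).pow measurable_const
    have hconj : Real.HolderConjugate 2 2 := Real.HolderConjugate.two_two
    have hHolder := ENNReal.lintegral_mul_le_Lp_mul_Lq μ hconj hfm.aemeasurable hgm.aemeasurable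
    have hfg : ∀ ω, prodW Z A w₀ N ω = (f * g) ω := by
      intro ω
      have h12 : prodW Z A w₁ N ω * prodW Z A w₂ N ω
          = prodW Z A w₀ N ω * prodW Z A w₀ N ω := by
        rw [← prodW_mul, ← prodW_mul]
        refine Finset.prod_congr rfl fun m _ => ?_
        rw [wt, wt]
        split
        · exact hw12 (Z m ω)
        · rfl
      show prodW Z A w₀ N ω = prodW Z A w₁ N ω ^ (1/2 : ℝ) * prodW Z A w₂ N ω ^ (1/2 : ℝ)
      rw [← ENNReal.mul_rpow_of_nonneg _ _ (by norm_num : (0:ℝ) ≤ 1/2), h12, ← sq,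
        ← ENNReal.rpow_natCast (prodW Z A w₀ N ω) 2, ← ENNReal.rpow_mul]
      norm_num
    have hf2 : ∀ ω, f ω ^ (2:ℝ) = prodW Z A w₁ N ω := by
      intro ω
      rw [hfdef]
      simp only
      rw [← ENNReal.rpow_mul]
      norm_num
    have hg2 : ∀ ω, g ω ^ (2:ℝ) = prodW Z A w₂ N ω := by
      intro ω
      rw [hgdef]
      simp only
      rw [← ENNReal.rpow_mul]
      norm_num
    have hVxα0 : (0:ℝ) < V x ^ α := lt_of_lt_of_le one_pos (hVα1 x)
    calc ∫⁻ ω, prodW Z A w₀ N ω ∂μ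
        = ∫⁻ ω, (f * g) ω ∂μ := lintegral_congr hfg
      _ ≤ (∫⁻ ω, f ω ^ (2:ℝ) ∂μ) ^ (1/2 : ℝ) * (∫⁻ ω, g ω ^ (2:ℝ) ∂μ) ^ (1/2 : ℝ) := hHolder
      _ = (∫⁻ ω, prodW Z A w₁ N ω ∂μ) ^ (1/2 : ℝ)
            * (∫⁻ ω, prodW Z A w₂ N ω ∂μ) ^ (1/2 : ℝ) := by
          rw [lintegral_congr hf2, lintegral_congr hg2]
      _ ≤ (ENNReal.ofReal (V x ^ α)) ^ (1/2 : ℝ) * (ENNReal.ofReal c₂) ^ (1/2 : ℝ) := by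
          exact mul_le_mul' (ENNReal.rpow_le_rpow (hs1 N) (by norm_num))
            (ENNReal.rpow_le_rpow (hs2 N) (by norm_num))
      _ = ENNReal.ofReal ((V x ^ α) ^ (1/2 : ℝ) * c₂ ^ (1/2 : ℝ)) := by
          rw [ENNReal.ofReal_rpow_of_pos hVxα0, ENNReal.ofReal_rpow_of_pos hc₂0,
            ENNReal.ofReal_mul (by positivity)]
      _ ≤ ENNReal.ofReal (Real.sqrt c₂ * V x) := by
          apply ENNReal.ofReal_le_ofReal
          have e1 : (V x ^ α) ^ (1/2 : ℝ) ≤ V x := by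
            rw [← Real.rpow_mul (hVy0 x)]
            calc V x ^ (α * (1/2)) ≤ V x ^ (1:ℝ) :=
                  Real.rpow_le_rpow_of_exponent_le (hV1 x) (by linarith)
              _ = V x := Real.rpow_one _
          have e2 : c₂ ^ (1/2 : ℝ) = Real.sqrt c₂ := (Real.sqrt_eq_rpow c₂).symm
          rw [e2, mul_comm]
          apply mul_le_mul_of_nonneg_left e1 (Real.sqrt_nonneg c₂)
  -- pointwise bound of the integrand by the monotone family `prodW w₀`
  have hone_le_w₀ : ∀ y, 1 ≤ w₀ y := fun y => ENNReal.one_le_ofReal.mpr hl1.le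
  have hpoint : ∀ ω, (⨆ n : ℕ,
      (if (n : ℕ∞) ≤ ⨅ (m : ℕ) (_ : 1 ≤ m ∧ Z m ω ∈ A), (m : ℕ∞)
        then ENNReal.ofReal l ^ n else 0)) ≤ ⨆ N, prodW Z A w₀ N ω := by
    intro ω
    refine iSup_le fun n => ?_
    split
    · next hcond =>
      refine le_iSup_of_le n (le_of_eq ?_)
      have hfact : ∀ m ∈ Finset.range n, wt Z A w₀ m ω = ENNReal.ofReal l := by
        intro m hm
        refine wt_of_alive Z A w₀ ?_
        intro k hk hkA
        rw [Finset.mem_Icc] at hk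
        rw [Finset.mem_range] at hm
        have hle : (⨅ (m' : ℕ) (_ : 1 ≤ m' ∧ Z m' ω ∈ A), (m' : ℕ∞)) ≤ (k : ℕ∞) :=
          iInf₂_le k ⟨hk.1, hkA⟩
        have h13 := le_trans hcond hle
        rw [Nat.cast_le] at h13
        omega
      rw [prodW, Finset.prod_congr rfl hfact, Finset.prod_const, Finset.card_range]
    · exact zero_le
  -- assemble
  calc ∫⁻ ω, ⨆ n : ℕ,
        (if (n : ℕ∞) ≤ ⨅ (m : ℕ) (_ : 1 ≤ m ∧ Z m ω ∈ A), (m : ℕ∞)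
          then ENNReal.ofReal l ^ n else 0) ∂μ
      ≤ ∫⁻ ω, ⨆ N, prodW Z A w₀ N ω ∂μ := lintegral_mono hpoint
    _ = ⨆ N, ∫⁻ ω, prodW Z A w₀ N ω ∂μ :=
        lintegral_iSup (fun N => prodW_meas Z A w₀ hZ hA measurable_const N)
          (fun i j hij ω => prodW_mono Z A w₀ hone_le_w₀ ω hij)
    _ ≤ ENNReal.ofReal (Real.sqrt c₂ * V x) := iSup_le fun N => hfinal N
end
end

section
/- Let E be a Polish space with partial order ⪯ with closed graph, and let (X_n)_{n≥0}, (Y_n)_{n≥0} be two independent Markov chains on E with order-preserving transition kernel P, started at x and y respectively. Define τ := inf{n ≥ 0 : X_n ⪯ Y_n}, and for t ≥ τ (with t a fixed positive integer) define η^x := X_t on {τ ≤ t} and η^x := æ on {τ > t}, η^y := Y_t on {τ ≤ t} and η^y := æ on {τ > t}, where æ is an extra point added to E with æ ⪯ æ and no other order relations. Then Law(η^x) is stochastically dominated by Law(η^y) in the extended ordered space E ∪ {æ}. -/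
open MeasureTheory ProbabilityTheory
open scoped Classical

/-- The order on `E ∪ {æ}` (modelled as `Option E`, with `æ = none`): the extra point `æ`
is comparable only to itself, and on `E` the order is the original one. -/
def extLE {E : Type*} [LE E] : Option E → Option E → Prop
  | some a, some b => a ≤ b
  | none, none => True
  | _, _ => False

instance {E : Type*} [m : MeasurableSpace E] : MeasurableSpace (Option E) := m.map some

/-- integrability of bounded measurable functions on finite measure spaces -/
lemma aux_integrable_of_abs_le {α : Type*} [MeasurableSpace α] {ν : Measure α}
    [IsFiniteMeasure ν] {g : α → ℝ} (hg : AEStronglyMeasurable g ν) {C : ℝ}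
    (hb : ∀ z, |g z| ≤ C) : Integrable g ν :=
  Integrable.mono' (integrable_const C) hg
    (Filter.Eventually.of_forall fun z => by simpa [Real.norm_eq_abs] using hb z)

lemma aux_Q_meas {E : Type*} [MeasurableSpace E] (P : Kernel E E) [IsSFiniteKernel P]
    {g : E → ℝ} (hg : Measurable g) : Measurable (fun z => ∫ w, g w ∂(P z)) := by
  have h : StronglyMeasurable (Function.uncurry fun (_ : E) (w : E) => g w) :=
    (hg.stronglyMeasurable.comp_measurable measurable_snd)
  exact (h.integral_kernel_prod_right (κ := P)).measurable

lemma aux_Q_bdd {E : Type*} [MeasurableSpace E] (P : Kernel E E) [IsMarkovKernel P]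
    {g : E → ℝ} {C : ℝ} (hb : ∀ z, |g z| ≤ C) (z : E) : |∫ w, g w ∂(P z)| ≤ C := by
  have h := norm_integral_le_of_norm_le_const (μ := P z) (f := g) (C := C)
    (Filter.Eventually.of_forall fun w => by simpa [Real.norm_eq_abs] using hb w)
  simpa [Real.norm_eq_abs, measure_univ] using h

/-- The one-step measure identity, deduced from the identity on indicator products. -/
lemma aux_measure_eq {E : Type*} [MeasurableSpace E] {Ω : Type*} [MeasurableSpace Ω]
    (μ : Measure Ω) [IsFiniteMeasure μ]
    (P : Kernel E E) [IsMarkovKernel P]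
    (Xn Yn X1 Y1 : Ω → E) (hXn : Measurable Xn) (hYn : Measurable Yn)
    (hX1 : Measurable X1) (hY1 : Measurable Y1)
    (hind : ∀ (A B : Set E), MeasurableSet A → MeasurableSet B →
      ∫ ω, (A.indicator (fun _ => (1:ℝ)) (X1 ω)) * (B.indicator (fun _ => (1:ℝ)) (Y1 ω)) ∂μ
        = ∫ ω, ((P (Xn ω)) A).toReal * ((P (Yn ω)) B).toReal ∂μ) :
    μ.map (fun ω => (X1 ω, Y1 ω)) =
      (μ ⊗ₘ ((P.comap Xn hXn) ×ₖ (P.comap Yn hYn))).snd := by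
  set κ : Kernel Ω (E × E) := (P.comap Xn hXn) ×ₖ (P.comap Yn hYn) with hκ
  have hpair : Measurable fun ω => (X1 ω, Y1 ω) := hX1.prodMk hY1
  have hκrect : ∀ (A B : Set E), MeasurableSet A → MeasurableSet B → ∀ ω,
      κ ω (A ×ˢ B) = (P (Xn ω)) A * (P (Yn ω)) B := by
    intro A B hA hB ω
    rw [hκ, Kernel.prod_apply, Measure.prod_prod, Kernel.comap_apply, Kernel.comap_apply]
  refine ext_of_generate_finite _ generateFrom_prod.symm isPiSystem_prod ?_ ?_
  · rintro s ⟨A, hA, B, hB, rfl⟩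
    simp only [Set.mem_setOf_eq] at hA hB
    have h1 : (μ.map fun ω => (X1 ω, Y1 ω)) (A ×ˢ B) = μ (X1 ⁻¹' A ∩ Y1 ⁻¹' B) := by
      rw [Measure.map_apply hpair (hA.prod hB), Set.mk_preimage_prod]
    have h2 : (μ ⊗ₘ κ).snd (A ×ˢ B) = ∫⁻ ω, (P (Xn ω)) A * (P (Yn ω)) B ∂μ := by
      rw [Measure.snd_apply (hA.prod hB),
        Measure.compProd_apply ((hA.prod hB).preimage measurable_snd)]
      refine lintegral_congr fun ω => ?_
      have hpre : (Prod.mk ω ⁻¹' (Prod.snd ⁻¹' (A ×ˢ B))) = A ×ˢ B := rfl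
      rw [hpre, hκrect A B hA hB ω]
    have key := hind A B hA hB
    have hL : ∫ ω, (A.indicator (fun _ => (1:ℝ)) (X1 ω)) *
        (B.indicator (fun _ => (1:ℝ)) (Y1 ω)) ∂μ = (μ (X1 ⁻¹' A ∩ Y1 ⁻¹' B)).toReal := by
      have hptw : ∀ ω, (A.indicator (fun _ => (1:ℝ)) (X1 ω)) *
          (B.indicator (fun _ => (1:ℝ)) (Y1 ω))
          = (X1 ⁻¹' A ∩ Y1 ⁻¹' B).indicator (fun _ => (1:ℝ)) ω := by
        intro ω
        by_cases hx : X1 ω ∈ A <;> by_cases hy : Y1 ω ∈ B <;>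
          simp [Set.indicator_apply, hx, hy, Set.mem_preimage]
      simp_rw [hptw]
      rw [integral_indicator_const _ ((hX1 hA).inter (hY1 hB))]; simp; rfl
    have hmeasPP : Measurable fun ω => (P (Xn ω)) A * (P (Yn ω)) B :=
      ((P.measurable_coe hA).comp hXn).mul ((P.measurable_coe hB).comp hYn)
    have hfin : ∀ᵐ ω ∂μ, (P (Xn ω)) A * (P (Yn ω)) B < ⊤ :=
      Filter.Eventually.of_forall fun ω => by
        calc (P (Xn ω)) A * (P (Yn ω)) B ≤ 1 * 1 :=
              mul_le_mul' prob_le_one prob_le_one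
          _ < ⊤ := by simp
    have hR : ∫ ω, ((P (Xn ω)) A).toReal * ((P (Yn ω)) B).toReal ∂μ
        = (∫⁻ ω, (P (Xn ω)) A * (P (Yn ω)) B ∂μ).toReal := by
      rw [← integral_toReal hmeasPP.aemeasurable hfin]
      simp_rw [ENNReal.toReal_mul]
    rw [h1, h2]
    have hfin1 : μ (X1 ⁻¹' A ∩ Y1 ⁻¹' B) ≠ ⊤ := measure_ne_top _ _
    have hfin2 : (∫⁻ ω, (P (Xn ω)) A * (P (Yn ω)) B ∂μ) ≠ ⊤ := by
      refine ne_of_lt ?_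
      calc (∫⁻ ω, (P (Xn ω)) A * (P (Yn ω)) B ∂μ) ≤ ∫⁻ _, 1 ∂μ :=
            lintegral_mono fun ω => le_trans (mul_le_mul' prob_le_one prob_le_one) (by simp)
        _ < ⊤ := by simp [measure_lt_top]
    rw [hL, hR] at key
    exact (ENNReal.toReal_eq_toReal_iff' hfin1 hfin2).mp key
  · rw [Measure.map_apply hpair MeasurableSet.univ, Measure.snd_apply MeasurableSet.univ]
    simp [Measure.compProd_apply_univ]

/-- The one-step integral identity for bounded measurable functions. -/
lemma aux_one_step {E : Type*} [MeasurableSpace E] {Ω : Type*} [MeasurableSpace Ω]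
    (μ : Measure Ω) [IsFiniteMeasure μ]
    (P : Kernel E E) [IsMarkovKernel P]
    (Xn Yn X1 Y1 : Ω → E) (hXn : Measurable Xn) (hYn : Measurable Yn)
    (hX1 : Measurable X1) (hY1 : Measurable Y1)
    (hind : ∀ (A B : Set E), MeasurableSet A → MeasurableSet B →
      ∫ ω, (A.indicator (fun _ => (1:ℝ)) (X1 ω)) * (B.indicator (fun _ => (1:ℝ)) (Y1 ω)) ∂μ
        = ∫ ω, ((P (Xn ω)) A).toReal * ((P (Yn ω)) B).toReal ∂μ)
    (g h : E → ℝ) (hg : Measurable g) (hh : Measurable h)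
    (Cg Ch : ℝ) (hgb : ∀ z, |g z| ≤ Cg) (hhb : ∀ z, |h z| ≤ Ch) :
    ∫ ω, g (X1 ω) * h (Y1 ω) ∂μ
      = ∫ ω, (∫ w, g w ∂(P (Xn ω))) * (∫ w, h w ∂(P (Yn ω))) ∂μ := by
  have hmeq := aux_measure_eq μ P Xn Yn X1 Y1 hXn hYn hX1 hY1 hind
  set κ : Kernel Ω (E × E) := (P.comap Xn hXn) ×ₖ (P.comap Yn hYn) with hκ
  have hpair : Measurable fun ω => (X1 ω, Y1 ω) := hX1.prodMk hY1
  have hF2 : Measurable fun p : E × E => g p.1 * h p.2 :=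
    (hg.comp measurable_fst).mul (hh.comp measurable_snd)
  have hF2b : ∀ p : E × E, |g p.1 * h p.2| ≤ |Cg| * |Ch| := fun p => by
    rw [abs_mul]
    exact mul_le_mul ((hgb p.1).trans (le_abs_self _)) ((hhb p.2).trans (le_abs_self _))
      (abs_nonneg _) (abs_nonneg _)
  have h1 : ∫ ω, g (X1 ω) * h (Y1 ω) ∂μ
      = ∫ p : E × E, g p.1 * h p.2 ∂(μ.map (fun ω => (X1 ω, Y1 ω))) := by
    rw [integral_map hpair.aemeasurable hF2.aestronglyMeasurable]
  rw [h1, hmeq]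
  have h2 : ∫ p : E × E, g p.1 * h p.2 ∂((μ ⊗ₘ κ).snd)
      = ∫ q : Ω × (E × E), g q.2.1 * h q.2.2 ∂(μ ⊗ₘ κ) := by
    rw [Measure.snd, integral_map measurable_snd.aemeasurable hF2.aestronglyMeasurable]
  rw [h2]
  have hintc : Integrable (fun q : Ω × (E × E) => g q.2.1 * h q.2.2) (μ ⊗ₘ κ) :=
    aux_integrable_of_abs_le ((hF2.comp measurable_snd)).aestronglyMeasurable
      (fun q => hF2b q.2)
  rw [Measure.integral_compProd hintc]
  refine integral_congr_ae (Filter.Eventually.of_forall fun ω => ?_)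
  have hκω : κ ω = (P (Xn ω)).prod (P (Yn ω)) := by
    rw [hκ, Kernel.prod_apply, Kernel.comap_apply, Kernel.comap_apply]
  show ∫ b : E × E, g b.1 * h b.2 ∂(κ ω) = _
  rw [hκω]
  exact integral_prod_mul g h


theorem stmt_15 {E : Type*} [MeasurableSpace E] [TopologicalSpace E] [PolishSpace E]
    [BorelSpace E] [PartialOrder E]
    (hclosed : IsClosed {pr : E × E | pr.1 ≤ pr.2})
    (P : Kernel E E) [IsMarkovKernel P]
    (horderpres : ∀ x y : E, x ≤ y → ∀ f : E → ℝ, Measurable f →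
      (∃ C : ℝ, ∀ z, |f z| ≤ C) → Monotone f → ∫ z, f z ∂(P x) ≤ ∫ z, f z ∂(P y))
    {Ω : Type*} [MeasurableSpace Ω] (μ : Measure Ω) [IsProbabilityMeasure μ]
    (X Y : ℕ → Ω → E) (hXmeas : ∀ n, Measurable (X n)) (hYmeas : ∀ n, Measurable (Y n))
    -- the pair `(X, Y)` is Markov with the product kernel `P ⊗ P`
    -- (i.e. `X` and `Y` are independent chains each with kernel `P`)
    (hMarkov : ∀ (n : ℕ) (A B : Set E), MeasurableSet A → MeasurableSet B →
      (μ[fun ω => Set.indicator A (fun _ => (1 : ℝ)) (X (n + 1) ω) *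
            Set.indicator B (fun _ => (1 : ℝ)) (Y (n + 1) ω) |
          MeasurableSpace.comap (fun ω (i : Fin (n + 1)) => (X i ω, Y i ω)) inferInstance])
        =ᵐ[μ] fun ω => ((P (X n ω)) A).toReal * ((P (Y n ω)) B).toReal)
    (x y : E) (hX0 : ∀ ω, X 0 ω = x) (hY0 : ∀ ω, Y 0 ω = y)
    (t : ℕ) (ht : 0 < t) :
    -- `Law(η^x)` is stochastically dominated by `Law(η^y)`, where
    -- `η^x = X t` on `{τ ≤ t}`, `η^x = æ` on `{τ > t}` (and similarly for `η^y`),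
    -- `τ = inf {n ≥ 0 : X n ≤ Y n}`; here `{τ ≤ t} = {∃ n ≤ t, X n ≤ Y n}`
    ∀ f : Option E → ℝ, Measurable f → (∃ C : ℝ, ∀ z, |f z| ≤ C) →
      (∀ a b : Option E, extLE a b → f a ≤ f b) →
      ∫ ω, f (if ∃ n ≤ t, X n ω ≤ Y n ω then some (X t ω) else none) ∂μ
        ≤ ∫ ω, f (if ∃ n ≤ t, X n ω ≤ Y n ω then some (Y t ω) else none) ∂μ := by
  intro f hfmeas hfbdd hfmono
  obtain ⟨C, hC⟩ := hfbdd
  have hC0 : 0 ≤ C := (abs_nonneg (f none)).trans (hC none)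
  -- notation for the filtration
  have hφmeas : ∀ n : ℕ, Measurable (fun ω (i : Fin (n + 1)) => (X i ω, Y i ω)) := fun n =>
    measurable_pi_lambda _ fun i => (hXmeas i).prodMk (hYmeas i)
  have hFle : ∀ n : ℕ,
      MeasurableSpace.comap (fun ω (i : Fin (n + 1)) => (X i ω, Y i ω)) inferInstance
        ≤ ‹MeasurableSpace Ω› := fun n =>
    MeasurableSpace.comap_le_iff_le_map.mpr (hφmeas n)
  have hFmono : ∀ i m : ℕ, i ≤ m →
      MeasurableSpace.comap (fun ω (k : Fin (i + 1)) => (X k ω, Y k ω)) inferInstance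
        ≤ MeasurableSpace.comap (fun ω (k : Fin (m + 1)) => (X k ω, Y k ω)) inferInstance := by
    intro i m him
    have hres : Measurable (fun (v : Fin (m+1) → E × E) (k : Fin (i+1)) =>
        v (Fin.castLE (by omega) k)) :=
      measurable_pi_lambda _ fun k => measurable_pi_apply _
    have hcomp : (fun ω (k : Fin (i + 1)) => (X k ω, Y k ω))
        = (fun (v : Fin (m+1) → E × E) (k : Fin (i+1)) => v (Fin.castLE (by omega) k))
          ∘ (fun ω (k : Fin (m + 1)) => (X k ω, Y k ω)) := by
      funext ω; funext k; simp
    rw [hcomp, ← MeasurableSpace.comap_comp]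
    exact MeasurableSpace.comap_mono (measurable_iff_comap_le.mp hres)
  -- the one-step indicator identity on sets of the filtration
  have hind : ∀ (n : ℕ) (S : Set Ω),
      MeasurableSet[MeasurableSpace.comap (fun ω (i : Fin (n + 1)) => (X i ω, Y i ω))
        inferInstance] S →
      ∀ (A B : Set E), MeasurableSet A → MeasurableSet B →
      ∫ ω in S, (A.indicator (fun _ => (1:ℝ)) (X (n+1) ω)) *
          (B.indicator (fun _ => (1:ℝ)) (Y (n+1) ω)) ∂μ
        = ∫ ω in S, ((P (X n ω)) A).toReal * ((P (Y n ω)) B).toReal ∂μ := by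
    intro n S hS A B hA hB
    have hprodmeas : Measurable (fun ω => (A.indicator (fun _ => (1:ℝ)) (X (n+1) ω)) *
        (B.indicator (fun _ => (1:ℝ)) (Y (n+1) ω))) :=
      ((measurable_const.indicator hA).comp (hXmeas (n+1))).mul
        ((measurable_const.indicator hB).comp (hYmeas (n+1)))
    have hint : Integrable (fun ω => (A.indicator (fun _ => (1:ℝ)) (X (n+1) ω)) *
        (B.indicator (fun _ => (1:ℝ)) (Y (n+1) ω))) μ :=
      aux_integrable_of_abs_le hprodmeas.aestronglyMeasurable (C := 1)
        (fun ω => by unfold Set.indicator; split_ifs <;> norm_num)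
    have e1 := (setIntegral_condExp (hFle n) hint hS).symm
    have e2 : ∫ ω in S, (μ[fun ω => (A.indicator (fun _ => (1:ℝ)) (X (n+1) ω)) *
          (B.indicator (fun _ => (1:ℝ)) (Y (n+1) ω)) |
        MeasurableSpace.comap (fun ω (i : Fin (n + 1)) => (X i ω, Y i ω)) inferInstance]) ω ∂μ
        = ∫ ω in S, ((P (X n ω)) A).toReal * ((P (Y n ω)) B).toReal ∂μ :=
      integral_congr_ae (ae_restrict_of_ae (hMarkov n A B hA hB))
    exact e1.trans e2
  -- the t-i step identity
  have hQmeas : ∀ g : E → ℝ, Measurable g → Measurable (fun z => ∫ w, g w ∂(P z)) :=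
    fun g hg => aux_Q_meas P hg
  have hstep : ∀ (n : ℕ) (S : Set Ω),
      MeasurableSet[MeasurableSpace.comap (fun ω (i : Fin (n + 1)) => (X i ω, Y i ω))
        inferInstance] S →
      ∀ (g h : E → ℝ), Measurable g → Measurable h →
      ∀ (Cg Ch : ℝ), (∀ z, |g z| ≤ Cg) → (∀ z, |h z| ≤ Ch) →
      ∫ ω in S, g (X (n+1) ω) * h (Y (n+1) ω) ∂μ
        = ∫ ω in S, (∫ w, g w ∂(P (X n ω))) * (∫ w, h w ∂(P (Y n ω))) ∂μ := by
    intro n S hS g h hg hh Cg Ch hgb hhb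
    exact aux_one_step (μ.restrict S) P (X n) (Y n) (X (n+1)) (Y (n+1))
      (hXmeas n) (hYmeas n) (hXmeas (n+1)) (hYmeas (n+1))
      (fun A B hA hB => hind n S hS A B hA hB) g h hg hh Cg Ch hgb hhb
  -- properties of the iterated kernel operator
  have hQprop : ∀ (k : ℕ) (g : E → ℝ) (Cg : ℝ), Measurable g → (∀ z, |g z| ≤ Cg) →
      Monotone g →
      Measurable ((fun (g : E → ℝ) z => ∫ w, g w ∂(P z))^[k] g)
        ∧ (∀ z, |(fun (g : E → ℝ) z => ∫ w, g w ∂(P z))^[k] g z| ≤ Cg)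
        ∧ Monotone ((fun (g : E → ℝ) z => ∫ w, g w ∂(P z))^[k] g) := by
    intro k
    induction k with
    | zero => intro g Cg hg hb hm; exact ⟨hg, hb, hm⟩
    | succ k ih =>
      intro g Cg hg hb hm
      rw [Function.iterate_succ_apply]
      exact ih _ Cg (hQmeas g hg) (fun z => aux_Q_bdd P hb z)
        (fun a b hab => horderpres a b hab g hg ⟨Cg, hb⟩ hm)
  have hQone : ∀ k : ℕ, (fun (g : E → ℝ) z => ∫ w, g w ∂(P z))^[k] (fun _ => (1:ℝ))
      = fun _ => (1:ℝ) := by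
    intro k
    induction k with
    | zero => rfl
    | succ k ih =>
      rw [Function.iterate_succ_apply]
      simp only [integral_const, measure_univ, probReal_univ, ENNReal.toReal_one, one_smul]
      exact ih
  -- multi-step identity
  have hmulti : ∀ (i k : ℕ) (S : Set Ω),
      MeasurableSet[MeasurableSpace.comap (fun ω (j : Fin (i + 1)) => (X j ω, Y j ω))
        inferInstance] S →
      ∀ (g h : E → ℝ), Measurable g → Measurable h →
      ∀ (Cg Ch : ℝ), (∀ z, |g z| ≤ Cg) → (∀ z, |h z| ≤ Ch) → Monotone g → Monotone h →
      ∫ ω in S, g (X (i+k) ω) * h (Y (i+k) ω) ∂μ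
        = ∫ ω in S, ((fun (g : E → ℝ) z => ∫ w, g w ∂(P z))^[k] g) (X i ω) *
            ((fun (g : E → ℝ) z => ∫ w, g w ∂(P z))^[k] h) (Y i ω) ∂μ := by
    intro i k
    induction k with
    | zero => intro S hS g h hg hh Cg Ch hgb hhb hgm hhm; rfl
    | succ k ih =>
      intro S hS g h hg hh Cg Ch hgb hhb hgm hhm
      have hSk : MeasurableSet[MeasurableSpace.comap
          (fun ω (j : Fin (i + k + 1)) => (X j ω, Y j ω)) inferInstance] S :=
        hFmono i (i+k) (by omega) S hS
      have h1 : ∫ ω in S, g (X (i+(k+1)) ω) * h (Y (i+(k+1)) ω) ∂μ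
          = ∫ ω in S, (∫ w, g w ∂(P (X (i+k) ω))) * (∫ w, h w ∂(P (Y (i+k) ω))) ∂μ := by
        have := hstep (i+k) S hSk g h hg hh Cg Ch hgb hhb
        have harith : i + (k+1) = (i + k) + 1 := by omega
        rw [harith]
        exact this
      rw [h1]
      have h2 := ih S hS (fun z => ∫ w, g w ∂(P z)) (fun z => ∫ w, h w ∂(P z))
        (hQmeas g hg) (hQmeas h hh) Cg Ch
        (fun z => aux_Q_bdd P hgb z) (fun z => aux_Q_bdd P hhb z)
        (fun a b hab => horderpres a b hab g hg ⟨Cg, hgb⟩ hgm)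
        (fun a b hab => horderpres a b hab h hh ⟨Ch, hhb⟩ hhm)
      rw [h2, ← Function.iterate_succ_apply, ← Function.iterate_succ_apply]
  -- the partition by the first meeting time
  set U : Set Ω := {ω | ∃ n ≤ t, X n ω ≤ Y n ω} with hU
  set A : ℕ → Set Ω := fun i => {ω | X i ω ≤ Y i ω ∧ ∀ j < i, ¬ X j ω ≤ Y j ω} with hA
  have hL : MeasurableSet {pr : E × E | pr.1 ≤ pr.2} := hclosed.measurableSet
  have hAmeasF : ∀ i : ℕ, MeasurableSet[MeasurableSpace.comap
      (fun ω (k : Fin (i + 1)) => (X k ω, Y k ω)) inferInstance] (A i) := by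
    intro i
    set B : Set (Fin (i+1) → E × E) :=
      {v | (v (Fin.last i)).1 ≤ (v (Fin.last i)).2 ∧
        ∀ j : Fin (i+1), (j : ℕ) < i → ¬ ((v j).1 ≤ (v j).2)} with hB
    have hBmeas : MeasurableSet B := by
      have h1 : MeasurableSet {v : Fin (i+1) → E × E |
          (v (Fin.last i)).1 ≤ (v (Fin.last i)).2} := by
        have := (measurable_pi_apply (X := fun _ : Fin (i+1) => E × E) (Fin.last i)) hL
        simpa [Set.preimage_setOf_eq] using this
      have h2 : MeasurableSet {v : Fin (i+1) → E × E |
          ∀ j : Fin (i+1), (j : ℕ) < i → ¬ ((v j).1 ≤ (v j).2)} := by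
        have heq : {v : Fin (i+1) → E × E | ∀ j : Fin (i+1), (j : ℕ) < i → ¬ ((v j).1 ≤ (v j).2)}
            = ⋂ (j : Fin (i+1)) (_ : (j : ℕ) < i),
                (fun v => v j) ⁻¹' {pr : E × E | pr.1 ≤ pr.2}ᶜ := by
          ext v; simp [Set.mem_iInter]
        rw [heq]
        exact MeasurableSet.iInter fun j => MeasurableSet.iInter fun _ =>
          (measurable_pi_apply (X := fun _ : Fin (i+1) => E × E) j) hL.compl
      exact h1.inter h2
    refine ⟨B, hBmeas, ?_⟩
    ext ω
    simp only [Set.mem_preimage, hB, Set.mem_setOf_eq, Fin.val_last, hA]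
    constructor
    · rintro ⟨h1, h2⟩
      exact ⟨h1, fun j hj => h2 ⟨j, by omega⟩ hj⟩
    · rintro ⟨h1, h2⟩
      exact ⟨h1, fun j hj => h2 j (by omega)⟩
  have hAmeas : ∀ i : ℕ, MeasurableSet (A i) := fun i => hFle i _ (hAmeasF i)
  have hUmeas : MeasurableSet U := by
    have : U = ⋃ n ∈ Finset.range (t+1), (fun ω => (X n ω, Y n ω)) ⁻¹'
        {pr : E × E | pr.1 ≤ pr.2} := by
      ext ω; simp only [hU, Set.mem_setOf_eq, Set.mem_iUnion, Set.mem_preimage,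
        Finset.mem_range]
      constructor
      · rintro ⟨n, hn, hle⟩; exact ⟨n, by omega, hle⟩
      · rintro ⟨n, hn, hle⟩; exact ⟨n, by omega, hle⟩
    rw [this]
    exact MeasurableSet.biUnion (Finset.range (t+1)).countable_toSet
      fun n _ => ((hXmeas n).prodMk (hYmeas n)) hL
  have hUnion : U = ⋃ i ∈ Finset.range (t+1), A i := by
    ext ω
    simp only [hU, Set.mem_setOf_eq, Set.mem_iUnion, Finset.mem_range, hA]
    constructor
    · rintro ⟨n, hn, hle⟩
      have hex : ∃ m, X m ω ≤ Y m ω := ⟨n, hle⟩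
      refine ⟨Nat.find hex, by have := Nat.find_min' hex hle; omega,
        Nat.find_spec hex, fun j hj => Nat.find_min hex hj⟩
    · rintro ⟨i, hi, h1, _⟩
      exact ⟨i, by omega, h1⟩
  have hdisj : (↑(Finset.range (t+1)) : Set ℕ).Pairwise (Function.onFun Disjoint A) := by
    intro i _ j _ hij
    refine Set.disjoint_left.mpr ?_
    rintro ω ⟨h1, h2⟩ ⟨h3, h4⟩
    rcases Nat.lt_or_ge i j with hlt | hge
    · exact h4 i hlt h1
    · exact h2 j (by omega) h3
  -- the two integrands
  have hsome_meas : Measurable (some : E → Option E) := fun _ hs => hs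
  set g0 : E → ℝ := fun a => f (some a) with hg0
  have hg0meas : Measurable g0 := hfmeas.comp hsome_meas
  have hg0b : ∀ z, |g0 z| ≤ C := fun z => hC (some z)
  have hg0mono : Monotone g0 := fun a b hab => hfmono (some a) (some b) hab
  set Gx : Ω → ℝ := fun ω => f (if ∃ n ≤ t, X n ω ≤ Y n ω then some (X t ω) else none)
    with hGx
  set Gy : Ω → ℝ := fun ω => f (if ∃ n ≤ t, X n ω ≤ Y n ω then some (Y t ω) else none)
    with hGy
  have hGxmeas : Measurable Gx := by
    apply hfmeas.comp
    exact Measurable.ite hUmeas (hsome_meas.comp (hXmeas t)) measurable_const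
  have hGymeas : Measurable Gy := by
    apply hfmeas.comp
    exact Measurable.ite hUmeas (hsome_meas.comp (hYmeas t)) measurable_const
  have hGxint : Integrable Gx μ :=
    aux_integrable_of_abs_le hGxmeas.aestronglyMeasurable (fun ω => hC _)
  have hGyint : Integrable Gy μ :=
    aux_integrable_of_abs_le hGymeas.aestronglyMeasurable (fun ω => hC _)
  -- split the integrals
  have hsplitx : ∫ ω, Gx ω ∂μ = (∑ i ∈ Finset.range (t+1), ∫ ω in A i, Gx ω ∂μ)
      + ∫ ω in Uᶜ, Gx ω ∂μ := by
    rw [← integral_add_compl hUmeas hGxint, hUnion]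
    congr 1
    exact integral_biUnion_finset _ (fun i _ => hAmeas i) hdisj
      (fun i _ => hGxint.integrableOn)
  have hsplity : ∫ ω, Gy ω ∂μ = (∑ i ∈ Finset.range (t+1), ∫ ω in A i, Gy ω ∂μ)
      + ∫ ω in Uᶜ, Gy ω ∂μ := by
    rw [← integral_add_compl hUmeas hGyint, hUnion]
    congr 1
    exact integral_biUnion_finset _ (fun i _ => hAmeas i) hdisj
      (fun i _ => hGyint.integrableOn)
  -- on the complement both integrands agree
  have hcompl : ∫ ω in Uᶜ, Gx ω ∂μ = ∫ ω in Uᶜ, Gy ω ∂μ := by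
    refine setIntegral_congr_fun hUmeas.compl fun ω hω => ?_
    have hnot : ¬ (∃ n ≤ t, X n ω ≤ Y n ω) := hω
    rw [hGx, hGy]
    simp only [if_neg hnot]
  -- on each piece, compare
  have hpiece : ∀ i ∈ Finset.range (t+1), ∫ ω in A i, Gx ω ∂μ ≤ ∫ ω in A i, Gy ω ∂μ := by
    intro i hi
    have hit : i ≤ t := by simp only [Finset.mem_range] at hi; omega
    have hsub : A i ⊆ U := by
      rw [hUnion]; exact Set.subset_biUnion_of_mem (u := A) hi
    have hGxA : ∀ ω ∈ A i, Gx ω = g0 (X t ω) * (fun _ => (1:ℝ)) (Y t ω) := by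
      intro ω hω
      have : (∃ n ≤ t, X n ω ≤ Y n ω) := hsub hω
      rw [hGx]; simp only [if_pos this, hg0]; ring
    have hGyA : ∀ ω ∈ A i, Gy ω = (fun _ => (1:ℝ)) (X t ω) * g0 (Y t ω) := by
      intro ω hω
      have : (∃ n ≤ t, X n ω ≤ Y n ω) := hsub hω
      rw [hGy]; simp only [if_pos this, hg0]; ring
    have harith : i + (t - i) = t := by omega
    have hone : (∀ z : E, |(fun _ => (1:ℝ)) z| ≤ 1) := fun z => by norm_num
    have hx1 : ∫ ω in A i, Gx ω ∂μ
        = ∫ ω in A i, ((fun (g : E → ℝ) z => ∫ w, g w ∂(P z))^[t-i] g0) (X i ω) *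
            ((fun (g : E → ℝ) z => ∫ w, g w ∂(P z))^[t-i] (fun _ => (1:ℝ))) (Y i ω) ∂μ := by
      rw [setIntegral_congr_fun (hAmeas i) hGxA]
      have := hmulti i (t-i) (A i) (hAmeasF i) g0 (fun _ => (1:ℝ)) hg0meas measurable_const
        C 1 hg0b hone hg0mono monotone_const
      rw [harith] at this
      exact this
    have hy1 : ∫ ω in A i, Gy ω ∂μ
        = ∫ ω in A i, ((fun (g : E → ℝ) z => ∫ w, g w ∂(P z))^[t-i] (fun _ => (1:ℝ))) (X i ω) *
            ((fun (g : E → ℝ) z => ∫ w, g w ∂(P z))^[t-i] g0) (Y i ω) ∂μ := by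
      rw [setIntegral_congr_fun (hAmeas i) hGyA]
      have := hmulti i (t-i) (A i) (hAmeasF i) (fun _ => (1:ℝ)) g0 measurable_const hg0meas
        1 C hone hg0b monotone_const hg0mono
      rw [harith] at this
      exact this
    rw [hx1, hy1, hQone (t-i)]
    obtain ⟨hQgmeas, hQgb, hQgmono⟩ := hQprop (t-i) g0 C hg0meas hg0b hg0mono
    have hintx : IntegrableOn (fun ω => ((fun (g : E → ℝ) z => ∫ w, g w ∂(P z))^[t-i] g0)
        (X i ω) * (fun _ => (1:ℝ)) (Y i ω)) (A i) μ := by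
      refine aux_integrable_of_abs_le ((hQgmeas.comp (hXmeas i)).mul
        measurable_const).aestronglyMeasurable (C := C * 1) fun ω => ?_
      rw [abs_mul]
      exact mul_le_mul (hQgb _) (by norm_num) (abs_nonneg _) hC0
    have hinty : IntegrableOn (fun ω => (fun _ => (1:ℝ)) (X i ω) *
        ((fun (g : E → ℝ) z => ∫ w, g w ∂(P z))^[t-i] g0) (Y i ω)) (A i) μ := by
      refine aux_integrable_of_abs_le (measurable_const.mul
        (hQgmeas.comp (hYmeas i))).aestronglyMeasurable (C := 1 * C) fun ω => ?_
      rw [abs_mul]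
      exact mul_le_mul (by norm_num) (hQgb _) (abs_nonneg _) (by norm_num)
    refine setIntegral_mono_on hintx hinty (hAmeas i) fun ω hω => ?_
    have hle : X i ω ≤ Y i ω := hω.1
    simp only [one_mul, mul_one]
    exact hQgmono hle
  -- conclude
  show ∫ ω, Gx ω ∂μ ≤ ∫ ω, Gy ω ∂μ
  rw [hsplitx, hsplity, hcompl]
  exact add_le_add_left (Finset.sum_le_sum hpiece) _
end
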